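/- arXiv:math/0201174 — 3 statements merged into one kernel-verified Lean document; each statement's English description precedes it below -/
import Mathlib

section
/- Let M be a matroid on a linearly ordered ground set E and x the maximal element of E (assumed not a loop). A set X ⊆ E \ {x} is a no-broken-circuit set of the deletion M \ x if and only if X is a no-broken-circuit set of M. -/
open scoped BigOperators
open scoped Matroid

/-- A circuit: a minimal dependent set. -/
def IsCircuit {n : ℕ} (M : Matroid (Fin n)) (C : Finset (Fin n)) : Prop :=
  M.Dep ↑C ∧ ∀ D : Finset (Fin n), D ⊂ C → ¬ M.Dep ↑D

/-- A broken circuit: a circuit (of size > 1) with its minimum removed. -/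
def IsBrokenCircuit {n : ℕ} (M : Matroid (Fin n)) (B : Finset (Fin n)) : Prop :=
  ∃ (C : Finset (Fin n)) (a : Fin n), IsCircuit M C ∧ 1 < C.card ∧ a ∈ C ∧
    (∀ b ∈ C, a ≤ b) ∧ B = C.erase a

/-- A no-broken-circuit set. -/
def NBCSet {n : ℕ} (M : Matroid (Fin n)) (I : Finset (Fin n)) : Prop :=
  M.Indep ↑I ∧ ∀ B ⊆ I, ¬ IsBrokenCircuit M B

/-- A unidependent set: contains exactly one circuit. -/
def Unidep {n : ℕ} (M : Matroid (Fin n)) (U : Finset (Fin n)) : Prop :=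
  ↑U ⊆ M.E ∧ ∃! C : Finset (Fin n), C ⊆ U ∧ IsCircuit M C

/-- x is a loop. -/
def IsLoopM {n : ℕ} (M : Matroid (Fin n)) (x : Fin n) : Prop := M.Dep {x}

/-- Deletion of a single element. -/
noncomputable def mdel {n : ℕ} (M : Matroid (Fin n)) (x : Fin n) : Matroid (Fin n) :=
  M ↾ (M.E \ {x})

/-- Contraction of a single element, via duality. -/
noncomputable def mcon {n : ℕ} (M : Matroid (Fin n)) (x : Fin n) : Matroid (Fin n) :=
  (M✶ ↾ (M.E \ {x}))✶

open scoped Classical in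
/-- The rank of a finite set: maximal cardinality of an independent subset. -/
noncomputable def rkFin {n : ℕ} (M : Matroid (Fin n)) (U : Finset (Fin n)) : ℕ :=
  (U.powerset.filter fun I : Finset (Fin n) => M.Indep (↑I : Set (Fin n))).sup Finset.card

/-- A simple matroid with ground set everything. -/
def SimpleGround {n : ℕ} (M : Matroid (Fin n)) : Prop :=
  M.E = Set.univ ∧ (∀ i : Fin n, M.Indep {i}) ∧
    ∀ i j : Fin n, i ≠ j → M.Indep {i, j}

/-- Number of inversions of a list. -/
def listInv {n : ℕ} : List (Fin n) → ℕ
  | [] => 0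
  | a :: t => (t.countP fun b => decide (b < a)) + listInv t

/-- χ evaluated on an ordered set, with the sign convention χ(X^σ) = sgn(σ) χ(X). -/
def ochi {n : ℕ} {K : Type*} [Field K] (χ : Finset (Fin n) → K) (l : List (Fin n)) : K :=
  (-1 : K) ^ listInv l * χ l.toFinset

/-- The flag of flats associated to an ordered set: closures of its suffixes. -/
def flagOf {n : ℕ} (M : Matroid (Fin n)) (l : List (Fin n)) : List (Set (Fin n)) :=
  l.tails.map fun t => M.closure ↑t.toFinset

/-- An element `b` is active in `I`: it lies in `cl(I) \ I` and is the minimum of the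
(unique) circuit contained in `I ∪ {b}`. -/
def ActiveIn {n : ℕ} (M : Matroid (Fin n)) (I : Finset (Fin n)) (b : Fin n) : Prop :=
  b ∈ M.closure ↑I ∧ b ∉ I ∧
    ∃ C : Finset (Fin n), C ⊆ insert b I ∧ IsCircuit M C ∧ ∀ c ∈ C, b ≤ c


/-- An inactive unidependent set: `min C(U)` is the minimal active element of
`U \\ min C(U)`. -/
def InactiveUnidep {n : ℕ} (M : Matroid (Fin n)) (U : Finset (Fin n)) : Prop :=
  Unidep M U ∧ ∃ (C : Finset (Fin n)) (a : Fin n), C ⊆ U ∧ IsCircuit M C ∧ a ∈ C ∧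
    (∀ b ∈ C, a ≤ b) ∧ ∀ b : Fin n, ActiveIn M (U.erase a) b → a ≤ b

section Alg

variable {n : ℕ} {K : Type*} [Field K]

/-- The defining relations of the graded algebra `E`: squares of generators vanish and
generators commute up to the nonzero scalars `β i j` (for `i < j`). -/
inductive ERel (n : ℕ) (K : Type*) [Field K] (β : Fin n → Fin n → K) :
    FreeAlgebra K (Fin n) → FreeAlgebra K (Fin n) → Prop
  | sq (i : Fin n) : ERel n K β (FreeAlgebra.ι K i * FreeAlgebra.ι K i) 0
  | comm {i j : Fin n} (h : i < j) :
      ERel n K β (FreeAlgebra.ι K j * FreeAlgebra.ι K i)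
        (β i j • (FreeAlgebra.ι K i * FreeAlgebra.ι K j))

/-- The algebra `E` generated by `e_1, …, e_n` with `e_i² = 0`, `e_j e_i = β i j • e_i e_j`. -/
abbrev EAlg (n : ℕ) (K : Type*) [Field K] (β : Fin n → Fin n → K) := RingQuot (ERel n K β)

/-- The generator `e_i` of `E`. -/
noncomputable def gen (β : Fin n → Fin n → K) (i : Fin n) : EAlg n K β :=
  RingQuot.mkAlgHom K (ERel n K β) (FreeAlgebra.ι K i)

/-- `e_X`: the product of the generators indexed by `X`, in increasing order. -/
noncomputable def eset (β : Fin n → Fin n → K) (X : Finset (Fin n)) : EAlg n K β :=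
  ((X.sort (· ≤ ·)).map (gen β)).prod

/-- The χ-boundary `∂e_X = Σ_p (-1)^p χ(X \ i_p) e_{X \ i_p}` (with `X = {i_1 < … < i_m}`,
`p` running from 1 to m). -/
noncomputable def bdry (β : Fin n → Fin n → K) (χ : Finset (Fin n) → K)
    (X : Finset (Fin n)) : EAlg n K β :=
  (((X.sort (· ≤ ·)).zipIdx.map Prod.swap).map fun pi =>
    ((-1 : K) ^ (pi.1 + 1) * χ (X.erase pi.2)) • eset β (X.erase pi.2)).sum

end Alg

section Chi

variable {n : ℕ} {K : Type*} [Field K]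

/-- Condition (UC1). -/
def UC1 (M : Matroid (Fin n)) (χ : Finset (Fin n) → K) : Prop :=
  ∀ I : Finset (Fin n), χ I ≠ 0 ↔ M.Indep ↑I

/-- Condition (UC2). -/
def UC2 (β : Fin n → Fin n → K) (M : Matroid (Fin n)) (χ : Finset (Fin n) → K) : Prop :=
  ∀ U U' : Finset (Fin n), Unidep M U → Unidep M U' → U' ⊆ U →
    ∃ ε : K, ε ≠ 0 ∧ bdry β χ U = ε • (bdry β χ U' * eset β (U \ U'))

/-- The (right) ideal `I_χ(M)` of `E`, as a `K`-subspace: it is spanned by the products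
of the boundaries of circuits of size `> 1` (and of the generators indexed by loops)
with arbitrary elements of `E`. -/
noncomputable def chiIdeal (β : Fin n → Fin n → K) (M : Matroid (Fin n))
    (χ : Finset (Fin n) → K) : Submodule K (EAlg n K β) :=
  Submodule.span K
    ({ y | ∃ C : Finset (Fin n), IsCircuit M C ∧ 1 < C.card ∧
        ∃ z : EAlg n K β, y = bdry β χ C * z } ∪
     { y | ∃ i : Fin n, IsCircuit M {i} ∧ ∃ z : EAlg n K β, y = gen β i * z })

/-- The χ-algebra `A_χ(M) = E / I_χ(M)` (as a `K`-vector space). -/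
abbrev AChi (β : Fin n → Fin n → K) (M : Matroid (Fin n)) (χ : Finset (Fin n) → K) :=
  EAlg n K β ⧸ chiIdeal β M χ

/-- The residue class `[e_X]` in `A_χ(M)`. -/
noncomputable def cls (β : Fin n → Fin n → K) (M : Matroid (Fin n))
    (χ : Finset (Fin n) → K) (X : Finset (Fin n)) : AChi β M χ :=
  Submodule.Quotient.mk (eset β X)

/-- The induced map `χ_{M/x}`, `I ↦ χ(I * x)`. -/
def chiC (χ : Finset (Fin n) → K) (x : Fin n) : Finset (Fin n) → K :=
  fun I => ochi χ (I.sort (· ≤ ·) ++ [x])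

/-- Iterated single-element contraction along a list (the head is contracted last). -/
noncomputable def contrList (M : Matroid (Fin n)) : List (Fin n) → Matroid (Fin n)
  | [] => M
  | x :: t => mcon (contrList M t) x

/-- Iterated induced `χ` along a list. -/
def chiL (χ : Finset (Fin n) → K) : List (Fin n) → (Finset (Fin n) → K)
  | [] => χ
  | x :: t => chiC (chiL χ t) x

/-- The iterated residue `p_{I^σ} = p_{i_{σ(1)}} ∘ ⋯ ∘ p_{i_{σ(ℓ)}}` associated to a family
`P` of single-element residue maps and an ordered set (a list). -/
noncomputable def pIter (β : Fin n → Fin n → K)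
    (P : ∀ (M : Matroid (Fin n)) (χ : Finset (Fin n) → K) (x : Fin n),
      AChi β M χ →ₗ[K] AChi β (mcon M x) (chiC χ x))
    (M : Matroid (Fin n)) (χ : Finset (Fin n) → K) :
    (l : List (Fin n)) → (AChi β M χ →ₗ[K] AChi β (contrList M l) (chiL χ l))
  | [] => LinearMap.id
  | x :: t => (P (contrList M t) (chiL χ t) x).comp (pIter β P M χ t)

/-- The defining property of the residue map `p_x` on (classes of) independent sets. -/
def ResFormula (β : Fin n → Fin n → K)
    (P : ∀ (M : Matroid (Fin n)) (χ : Finset (Fin n) → K) (x : Fin n),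
      AChi β M χ →ₗ[K] AChi β (mcon M x) (chiC χ x)) : Prop :=
  ∀ (M : Matroid (Fin n)) (χ : Finset (Fin n) → K) (x : Fin n), ¬ IsLoopM M x →
    ∀ I : Finset (Fin n), M.Indep ↑I →
      (x ∈ I → P M χ x (cls β M χ I) = cls β (mcon M x) (chiC χ x) (I.erase x)) ∧
      (∀ y ∈ I, IsCircuit M {x, y} → P M χ x (cls β M χ I) =
        (ochi χ ((I.erase y).sort (· ≤ ·) ++ [x]) /
          ochi χ ((I.erase y).sort (· ≤ ·) ++ [y])) •
            cls β (mcon M x) (chiC χ x) (I.erase y)) ∧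
      (x ∉ I → (∀ y ∈ I, ¬ IsCircuit M {x, y}) → P M χ x (cls β M χ I) = 0)

end Chi

lemma dep_mdel {n : ℕ} (M : Matroid (Fin n)) (hE : M.E = Set.univ) (x : Fin n)
    (S : Set (Fin n)) : (mdel M x).Dep S ↔ M.Dep S ∧ x ∉ S := by
  rw [mdel, Matroid.restrict_dep_iff, Matroid.dep_iff, hE]
  constructor
  · rintro ⟨h1, h2⟩
    exact ⟨⟨h1, by simp⟩, fun hx => (h2 hx).2 rfl⟩
  · rintro ⟨⟨h1, _⟩, hx⟩
    exact ⟨h1, fun a ha => ⟨by simp, fun h => hx (h ▸ ha)⟩⟩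

lemma circuit_mdel {n : ℕ} (M : Matroid (Fin n)) (hE : M.E = Set.univ) (x : Fin n)
    (C : Finset (Fin n)) : IsCircuit (mdel M x) C ↔ IsCircuit M C ∧ x ∉ C := by
  constructor
  · rintro ⟨hd, hmin⟩
    rw [dep_mdel M hE] at hd
    refine ⟨⟨hd.1, fun D hD hDd => hmin D hD ?_⟩, by simpa using hd.2⟩
    rw [dep_mdel M hE]
    exact ⟨hDd, fun hx => hd.2 (by exact_mod_cast hD.subset (by exact_mod_cast hx))⟩
  · rintro ⟨⟨hd, hmin⟩, hx⟩
    refine ⟨(dep_mdel M hE x _).2 ⟨hd, by simpa using hx⟩, fun D hD hDd => ?_⟩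
    exact hmin D hD ((dep_mdel M hE x _).1 hDd).1

/-- for the maximal element `x` (not a loop), the NBC sets of `M \ x` are
exactly the NBC sets of `M` avoiding `x`. -/
theorem nbc_delete_max {n : ℕ} (M : Matroid (Fin n)) (hE : M.E = Set.univ) (x : Fin n)
    (hmax : ∀ y : Fin n, y ≤ x) (hl : ¬ IsLoopM M x)
    (X : Finset (Fin n)) (hX : x ∉ X) :
    NBCSet (mdel M x) X ↔ NBCSet M X := by
  have hindep : (mdel M x).Indep ↑X ↔ M.Indep ↑X := by
    rw [mdel, Matroid.restrict_indep_iff, hE]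
    simp only [and_iff_left_iff_imp]
    intro _
    intro a ha
    exact ⟨by simp, fun h => hX (by exact_mod_cast h ▸ ha)⟩
  constructor
  · rintro ⟨hI, hB⟩
    refine ⟨hindep.1 hI, fun B hBX ⟨C, a, hC, hcard, haC, hamin, hBC⟩ => ?_⟩
    have hxC : x ∉ C := by
      intro hxC
      have hax : a ≠ x := by
        intro h
        have : C ⊆ {x} := fun b hb => by
          simp [le_antisymm (hmax b) (h ▸ hamin b hb)]
        have := Finset.card_le_card this
        simp at this; omega
      have : x ∈ B := hBC ▸ Finset.mem_erase.2 ⟨fun h => hax h.symm, hxC⟩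
      exact hX (hBX this)
    exact hB B hBX ⟨C, a, (circuit_mdel M hE x C).2 ⟨hC, hxC⟩, hcard, haC, hamin, hBC⟩
  · rintro ⟨hI, hB⟩
    refine ⟨hindep.2 hI, fun B hBX ⟨C, a, hC, hcard, haC, hamin, hBC⟩ => ?_⟩
    exact hB B hBX ⟨C, a, ((circuit_mdel M hE x C).1 hC).1, hcard, haC, hamin, hBC⟩
end

section
/- Let M be a simple matroid on a linearly ordered ground set E with maximal element n. Then the NBC sets of M are exactly the disjoint union of the NBC sets of M \ n and the sets I ∪ {n} where I is an NBC set of M/n. Equivalently: NBC(M) = NBC(M\n) ⊎ { I ∪ {n} : I ∈ NBC(M/n) }. -/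
open scoped BigOperators
open scoped Matroid

section NBCAux

variable {n : ℕ}

private lemma exists_circuit_of_dep (M : Matroid (Fin n)) (S : Finset (Fin n)) :
    M.Dep ↑S → ∃ C, C ⊆ S ∧ IsCircuit M C := by
  classical
  induction S using Finset.strongInduction with
  | _ S ih =>
    intro hS
    by_cases h : ∀ D : Finset (Fin n), D ⊂ S → ¬ M.Dep ↑D
    · exact ⟨S, Finset.Subset.refl _, hS, h⟩
    · push_neg at h
      obtain ⟨D, hDS, hD⟩ := h
      obtain ⟨C, hCD, hC⟩ := ih D hDS hD
      exact ⟨C, hCD.trans hDS.subset, hC⟩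

private lemma min_ne_max {C : Finset (Fin n)} {a x : Fin n} (hmax : ∀ y : Fin n, y ≤ x)
    (haC : a ∈ C) (hmin : ∀ b ∈ C, a ≤ b) (hcard : 1 < C.card) : a ≠ x := by
  intro h
  have hsub : C ⊆ {a} := fun b hb =>
    Finset.mem_singleton.mpr (le_antisymm (by rw [h]; exact hmax b) (hmin b hb))
  have := Finset.card_le_card hsub
  simp only [Finset.card_singleton] at this
  omega

private lemma del_indep_iff (M : Matroid (Fin n)) {x : Fin n} (hE : M.E = Set.univ)
    (I : Set (Fin n)) : (mdel M x).Indep I ↔ M.Indep I ∧ x ∉ I := by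
  show (M ↾ (M.E \ {x})).Indep I ↔ _
  rw [Matroid.restrict_indep_iff, hE, ← Set.compl_eq_univ_diff, Set.subset_compl_singleton_iff]

private lemma del_dep_iff (M : Matroid (Fin n)) {x : Fin n} (hE : M.E = Set.univ)
    (D : Set (Fin n)) (hxD : x ∉ D) : (mdel M x).Dep D ↔ M.Dep D := by
  rw [Matroid.dep_iff, Matroid.dep_iff, del_indep_iff M hE]
  constructor
  · rintro ⟨h1, -⟩
    exact ⟨fun h => h1 ⟨h, hxD⟩, by rw [hE]; exact Set.subset_univ _⟩
  · rintro ⟨h1, -⟩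
    refine ⟨fun h => h1 h.1, ?_⟩
    show D ⊆ M.E \ {x}
    rw [hE, ← Set.compl_eq_univ_diff]
    exact Set.subset_compl_singleton_iff.mpr hxD

private lemma circuit_del_iff (M : Matroid (Fin n)) {x : Fin n} (hE : M.E = Set.univ)
    (C : Finset (Fin n)) (hxC : x ∉ C) : IsCircuit (mdel M x) C ↔ IsCircuit M C := by
  have hxC' : x ∉ (↑C : Set (Fin n)) := by simpa using hxC
  constructor
  · rintro ⟨h1, h2⟩
    refine ⟨(del_dep_iff M hE _ hxC').mp h1, fun D hD hdep => h2 D hD ?_⟩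
    exact (del_dep_iff M hE _ (fun h => hxC' (hD.subset h))).mpr hdep
  · rintro ⟨h1, h2⟩
    refine ⟨(del_dep_iff M hE _ hxC').mpr h1, fun D hD hdep => h2 D hD ?_⟩
    exact (del_dep_iff M hE _ (fun h => hxC' (hD.subset h))).mp hdep

private lemma con_indep_iff (M : Matroid (Fin n)) {x : Fin n} (hx : M.Indep {x})
    (I : Set (Fin n)) : (mcon M x).Indep I ↔ x ∉ I ∧ M.Indep (insert x I) := by
  have hXE : (M.E \ {x} : Set (Fin n)) ⊆ M✶.E := by
    rw [Matroid.dual_ground]; exact Set.diff_subset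
  rw [show mcon M x = (M✶ ↾ (M.E \ {x}))✶ from rfl, Matroid.dual_indep_iff_exists',
    Matroid.restrict_ground_eq]
  constructor
  · rintro ⟨hIR, B, hB, hdisj⟩
    rw [Matroid.isBase_restrict_iff hXE] at hB
    have hxI : x ∉ I := fun h => (hIR h).2 rfl
    refine ⟨hxI, ?_⟩
    obtain ⟨Bh, hBh, hBBh⟩ := hB.indep.exists_isBase_superset
    have hxBh : x ∉ Bh := by
      intro hxBh
      obtain ⟨B', hB', hxB'⟩ := hx.exists_isBase_superset
      have hB₂ : M✶.IsBase (M.E \ B') := hB'.compl_isBase_dual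
      have hxB₂ : x ∉ M.E \ B' := fun h => h.2 (hxB' rfl)
      obtain ⟨y, hy, hyB⟩ := hBh.exchange hB₂ ⟨hxBh, hxB₂⟩
      have hyE : y ∈ M.E \ ({x} : Set (Fin n)) :=
        ⟨hy.1.1, fun h => hxB₂ (by rw [← Set.mem_singleton_iff.mp h]; exact hy.1)⟩
      have hBsub : B ⊆ Bh \ {x} := fun z hz => ⟨hBBh hz, fun h => (hB.subset hz).2 h⟩
      have hins : M✶.Indep (insert y B) :=
        hyB.indep.subset (Set.insert_subset_insert hBsub)
      exact hy.2 (hBBh (hB.mem_of_insert_indep hyE hins))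
    have hBhB : Bh ⊆ B := by
      intro y hyBh
      by_contra hyB
      have hyx : y ≠ x := fun h => hxBh (h ▸ hyBh)
      have hyE : y ∈ M.E \ ({x} : Set (Fin n)) := by
        refine ⟨?_, hyx⟩
        have := hBh.subset_ground hyBh
        rwa [Matroid.dual_ground] at this
      have hins : M✶.Indep (insert y B) := hBh.indep.subset (Set.insert_subset hyBh hBBh)
      exact hyB (hB.mem_of_insert_indep hyE hins)
    have hBeq : B = Bh := subset_antisymm hBBh hBhB
    have hBbase : M✶.IsBase B := hBeq ▸ hBh
    have hcomp : M.IsBase (M.E \ B) := hBbase.compl_isBase_of_dual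
    refine hcomp.indep.subset (Set.insert_subset ?_ ?_)
    · exact ⟨hx.subset_ground rfl, fun h => (hB.subset h).2 rfl⟩
    · intro z hz
      exact ⟨(hIR hz).1, Set.disjoint_left.mp hdisj hz⟩
  · rintro ⟨hxI, hind⟩
    obtain ⟨B', hB', hsub⟩ := hind.exists_isBase_superset
    have hB : M✶.IsBase (M.E \ B') := hB'.compl_isBase_dual
    have hIR : I ⊆ M.E \ ({x} : Set (Fin n)) := fun z hz =>
      ⟨hind.subset_ground (Set.mem_insert_of_mem _ hz), fun h => hxI (h ▸ hz)⟩
    refine ⟨hIR, M.E \ B', ?_, ?_⟩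
    · rw [Matroid.isBase_restrict_iff hXE]
      exact Matroid.IsBase.isBasis_of_subset hXE hB
        (Set.diff_subset_diff_right (Set.singleton_subset_iff.mpr (hsub (Set.mem_insert x I))))
    · exact Set.disjoint_left.mpr fun z hz hz' => hz'.2 (hsub (Set.mem_insert_of_mem _ hz))

private lemma con_ground (M : Matroid (Fin n)) (x : Fin n) :
    (mcon M x).E = M.E \ {x} := rfl

private lemma con_dep_iff (M : Matroid (Fin n)) {x : Fin n} (hE : M.E = Set.univ)
    (hx : M.Indep {x}) (D : Set (Fin n)) (hxD : x ∉ D) :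
    (mcon M x).Dep D ↔ ¬ M.Indep (insert x D) := by
  rw [Matroid.dep_iff, con_indep_iff M hx, con_ground]
  constructor
  · rintro ⟨h1, -⟩
    exact fun h => h1 ⟨hxD, h⟩
  · intro h1
    refine ⟨fun h => h1 h.2, ?_⟩
    rw [hE, ← Set.compl_eq_univ_diff]
    exact Set.subset_compl_singleton_iff.mpr hxD

private lemma circuit_card (M : Matroid (Fin n)) (hs : ∀ i : Fin n, M.Indep {i})
    {C : Finset (Fin n)} (hC : IsCircuit M C) : 1 < C.card := by
  have hne : C.Nonempty := by
    rw [← Finset.coe_nonempty]; exact hC.1.nonempty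
  rcases Nat.lt_or_ge 1 C.card with h | h
  · exact h
  · exfalso
    have h1 : C.card = 1 := le_antisymm h (Finset.card_pos.mpr hne)
    obtain ⟨i, rfl⟩ := Finset.card_eq_one.mp h1
    exact (Matroid.dep_iff.mp hC.1).1 (by simpa using hs i)

private lemma circuit_card_con (M : Matroid (Fin n)) {x : Fin n} (hE : M.E = Set.univ)
    (hs : ∀ i : Fin n, M.Indep {i}) (hp : ∀ i j : Fin n, i ≠ j → M.Indep {i, j})
    {C : Finset (Fin n)} (hC : IsCircuit (mcon M x) C) : 1 < C.card := by
  have hxC : x ∉ C := fun h => (hC.1.2 (Finset.mem_coe.mpr h)).2 rfl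
  have hne : C.Nonempty := by
    rw [← Finset.coe_nonempty]; exact hC.1.nonempty
  rcases Nat.lt_or_ge 1 C.card with h | h
  · exact h
  · exfalso
    have h1 : C.card = 1 := le_antisymm h (Finset.card_pos.mpr hne)
    obtain ⟨y, rfl⟩ := Finset.card_eq_one.mp h1
    have hyx : x ≠ y := fun h => hxC (by simp [h])
    have hdep := hC.1
    rw [con_dep_iff M hE (hs x) _ (by simpa using hyx)] at hdep
    exact hdep (by simpa using hp x y hyx)

end NBCAux

/-- for a simple matroid with maximal element `x`,
`NBC(M) = NBC(M\x) ⊎ { I ∪ {x} : I ∈ NBC(M/x) }`. -/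
theorem nbc_decomposition {n : ℕ} (M : Matroid (Fin n)) (hM : SimpleGround M) (x : Fin n)
    (hmax : ∀ y : Fin n, y ≤ x) (X : Finset (Fin n)) :
    NBCSet M X ↔
      ((x ∉ X ∧ NBCSet (mdel M x) X) ∨
        (∃ I : Finset (Fin n), x ∉ I ∧ NBCSet (mcon M x) I ∧ X = insert x I)) := by
  
  obtain ⟨hE, hsing, hpair⟩ := hM
  classical
  by_cases hxX : x ∈ X
  · -- x ∈ X: left disjunct impossible, use contraction
    have hxind : M.Indep {x} := hsing x
    constructor
    · intro hX
      right
      refine ⟨X.erase x, Finset.notMem_erase x X, ⟨?_, ?_⟩, (Finset.insert_erase hxX).symm⟩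
      · rw [con_indep_iff M hxind]
        refine ⟨by simp, ?_⟩
        have hco : insert x (↑(X.erase x) : Set (Fin n)) = ↑X := by
          rw [← Finset.coe_insert, Finset.insert_erase hxX]
        rw [hco]; exact hX.1
      · intro B hBI hBC
        obtain ⟨C, a, hC, hcard, haC, hamin, rfl⟩ := hBC
        have hxC : x ∉ C := fun h => (hC.1.2 (Finset.mem_coe.mpr h)).2 rfl
        have hdep : M.Dep ↑(insert x C) := by
          rw [Matroid.dep_iff]
          refine ⟨?_, by rw [hE]; exact Set.subset_univ _⟩
          have hd := (con_dep_iff M hE hxind ↑C (by simpa using hxC)).mp hC.1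
          rw [Finset.coe_insert]; exact hd
        obtain ⟨C', hC'sub, hC'⟩ := exists_circuit_of_dep M (insert x C) hdep
        have hcard' : 1 < C'.card := circuit_card M hsing hC'
        have hne : C'.Nonempty := Finset.card_pos.mp (by omega)
        have ha'C : C'.min' hne ∈ C' := C'.min'_mem hne
        have ha'min : ∀ b ∈ C', C'.min' hne ≤ b := fun b hb => C'.min'_le b hb
        have ha'x : C'.min' hne ≠ x := min_ne_max hmax ha'C ha'min hcard'
        refine hX.2 (C'.erase (C'.min' hne)) ?_
          ⟨C', C'.min' hne, hC', hcard', ha'C, ha'min, rfl⟩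
        intro y hy
        obtain ⟨hya', hyC'⟩ := Finset.mem_erase.mp hy
        rcases Finset.mem_insert.mp (hC'sub hyC') with rfl | hyC
        · exact hxX
        · have hya : y ≠ a := by
            rintro rfl
            have h1 : C'.min' hne ∈ C := by
              rcases Finset.mem_insert.mp (hC'sub ha'C) with h | h
              · exact absurd h ha'x
              · exact h
            exact hya' (le_antisymm (hamin _ h1) (ha'min _ hyC'))
          exact Finset.erase_subset x X (hBI (Finset.mem_erase.mpr ⟨hya, hyC⟩))
    · rintro (⟨hxX', -⟩ | ⟨I, hxI, hI, rfl⟩)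
      · exact absurd hxX hxX'
      · refine ⟨?_, ?_⟩
        · have h := ((con_indep_iff M hxind ↑I).mp hI.1).2
          rw [Finset.coe_insert]; exact h
        · intro B hBX hBC
          obtain ⟨C, a, hC, hcard, haC, hamin, rfl⟩ := hBC
          have hax : a ≠ x := min_ne_max hmax haC hamin hcard
          have hdep : (mcon M x).Dep ↑(C.erase x) := by
            rw [con_dep_iff M hE hxind _ (by simp)]
            intro hind
            refine (Matroid.dep_iff.mp hC.1).1 (hind.subset ?_)
            intro z hz
            rcases eq_or_ne z x with rfl | hzx
            · exact Set.mem_insert _ _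
            · exact Set.mem_insert_of_mem _
                (Finset.mem_coe.mpr (Finset.mem_erase.mpr ⟨hzx, Finset.mem_coe.mp hz⟩))
          obtain ⟨C₂, hC₂sub, hC₂⟩ := exists_circuit_of_dep (mcon M x) (C.erase x) hdep
          have hcard₂ : 1 < C₂.card := circuit_card_con M hE hsing hpair hC₂
          have hne : C₂.Nonempty := Finset.card_pos.mp (by omega)
          have ha'C : C₂.min' hne ∈ C₂ := C₂.min'_mem hne
          have ha'min : ∀ b ∈ C₂, C₂.min' hne ≤ b := fun b hb => C₂.min'_le b hb
          refine hI.2 (C₂.erase (C₂.min' hne)) ?_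
            ⟨C₂, C₂.min' hne, hC₂, hcard₂, ha'C, ha'min, rfl⟩
          intro y hy
          obtain ⟨hya', hyC₂⟩ := Finset.mem_erase.mp hy
          obtain ⟨hyx, hyC⟩ := Finset.mem_erase.mp (hC₂sub hyC₂)
          have hya : y ≠ a := by
            rintro rfl
            have h1 : C₂.min' hne ∈ C := (Finset.mem_erase.mp (hC₂sub ha'C)).2
            exact hya' (le_antisymm (hamin _ h1) (ha'min _ hyC₂))
          have hyX := hBX (Finset.mem_erase.mpr ⟨hya, hyC⟩)
          rcases Finset.mem_insert.mp hyX with rfl | h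
          · exact absurd rfl hyx
          · exact h
  · -- x ∉ X: right disjunct impossible, use deletion
    constructor
    · intro hX
      left
      refine ⟨hxX, ⟨?_, ?_⟩⟩
      · exact (del_indep_iff M hE _).mpr ⟨hX.1, by simpa using hxX⟩
      · intro B hBX hBC
        obtain ⟨C, a, hC, hcard, haC, hamin, rfl⟩ := hBC
        have hxC : x ∉ C := fun h => (hC.1.2 (Finset.mem_coe.mpr h)).2 rfl
        exact hX.2 _ hBX ⟨C, a, (circuit_del_iff M hE C hxC).mp hC, hcard, haC, hamin, rfl⟩
    · rintro (⟨-, hind, hnb⟩ | ⟨I, hxI, -, rfl⟩)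
      · refine ⟨((del_indep_iff M hE _).mp hind).1, ?_⟩
        intro B hBX hBC
        obtain ⟨C, a, hC, hcard, haC, hamin, rfl⟩ := hBC
        have hax : a ≠ x := min_ne_max hmax haC hamin hcard
        have hxC : x ∉ C := by
          intro hxC'
          exact hxX (hBX (Finset.mem_erase.mpr ⟨Ne.symm hax, hxC'⟩))
        exact hnb _ hBX ⟨C, a, (circuit_del_iff M hE C hxC).mpr hC, hcard, haC, hamin, rfl⟩
      · exact absurd (Finset.mem_insert_self x I) hxX
end

section
/- In a χ-algebra A_χ(M), for X ⊆ [n], the residue class [e_X] is nonzero if and only if X is an independent set of M. -/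
open scoped BigOperators
open scoped Matroid

/-! ### Auxiliary development -/

def List.enumFrom {α : Type*} (k : ℕ) (l : List α) : List (ℕ × α) := (l.zipIdx k).map Prod.swap

def List.enum {α : Type*} (l : List α) : List (ℕ × α) := l.enumFrom 0

theorem List.enumFrom_cons {α : Type*} (a : α) (l : List α) (k : ℕ) :
    (a :: l).enumFrom k = (k, a) :: l.enumFrom (k + 1) := rfl

@[simp]
theorem List.enum_nil {α : Type*} : ([] : List α).enum = [] := rfl

theorem List.enum_cons {α : Type*} (a : α) (l : List α) :
    (a :: l).enum = (0, a) :: l.enumFrom 1 := rfl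

theorem bdry_enum {n : ℕ} {K : Type*} [Field K] (β : Fin n → Fin n → K)
    (χ : Finset (Fin n) → K) (X : Finset (Fin n)) :
    bdry β χ X = ((X.sort (· ≤ ·)).enum.map fun pi =>
      ((-1 : K) ^ (pi.1 + 1) * χ (X.erase pi.2)) • eset β (X.erase pi.2)).sum := by
  rfl

namespace ClsAux

open Finsupp

variable {n : ℕ} {K : Type*} [Field K]

noncomputable def xb (K : Type*) [Field K] (S : Finset (Fin n)) : (Finset (Fin n) →₀ K) :=
  Finsupp.single S 1

noncomputable def gamma (β : Fin n → Fin n → K) (a : Fin n) (S : Finset (Fin n)) : K :=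
  ∏ s ∈ S.filter (· < a), β s a

noncomputable def Lop (β : Fin n → Fin n → K) (a : Fin n) :
    Module.End K (Finset (Fin n) →₀ K) :=
  Finsupp.linearCombination K
    (fun S => if a ∈ S then (0 : Finset (Fin n) →₀ K) else gamma β a S • xb K (insert a S))

lemma Lop_single (β : Fin n → Fin n → K) (a : Fin n) (S : Finset (Fin n)) (b : K) :
    Lop β a (Finsupp.single S b)
      = b • (if a ∈ S then (0 : Finset (Fin n) →₀ K) else gamma β a S • xb K (insert a S)) :=
  Finsupp.linearCombination_single K b S

lemma Lop_xb (β : Fin n → Fin n → K) (a : Fin n) (S : Finset (Fin n)) :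
    Lop β a (xb K S)
      = (if a ∈ S then (0 : Finset (Fin n) →₀ K) else gamma β a S • xb K (insert a S)) := by
  rw [xb, Lop_single, one_smul]

lemma Lop_sq (β : Fin n → Fin n → K) (a : Fin n) :
    (Lop β a * Lop β a : Module.End K (Finset (Fin n) →₀ K)) = 0 := by
  apply Finsupp.lhom_ext
  intro S b
  rw [Module.End.mul_apply, Lop_single, LinearMap.map_smul]
  by_cases h : a ∈ S
  · simp [h]
  · rw [if_neg h, LinearMap.map_smul, xb, Lop_single, one_smul,
      if_pos (Finset.mem_insert_self a S)]
    simp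

lemma gamma_insert_lt (β : Fin n → Fin n → K) {i j : Fin n} (h : i < j) (S : Finset (Fin n))
    (hi : i ∉ S) : gamma β j (insert i S) = β i j * gamma β j S := by
  rw [gamma, Finset.filter_insert, if_pos h, Finset.prod_insert (by simp [hi]), gamma]

lemma gamma_insert_ge (β : Fin n → Fin n → K) {i j : Fin n} (h : ¬ j < i) (S : Finset (Fin n)) :
    gamma β i (insert j S) = gamma β i S := by
  rw [gamma, Finset.filter_insert, if_neg h, gamma]

lemma Lop_comm (β : Fin n → Fin n → K) {i j : Fin n} (h : i < j) :
    (Lop β j * Lop β i : Module.End K (Finset (Fin n) →₀ K))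
      = β i j • (Lop β i * Lop β j) := by
  apply Finsupp.lhom_ext
  intro S b
  rw [Module.End.mul_apply, LinearMap.smul_apply, Module.End.mul_apply, Lop_single, Lop_single,
    LinearMap.map_smul, LinearMap.map_smul]
  by_cases hi : i ∈ S
  · by_cases hj : j ∈ S
    · simp [hi, hj]
    · rw [if_pos hi, if_neg hj, LinearMap.map_smul, xb, Lop_single, one_smul,
        if_pos (Finset.mem_insert_of_mem hi)]
      simp
  · by_cases hj : j ∈ S
    · rw [if_pos hj, if_neg hi, LinearMap.map_smul, xb, Lop_single, one_smul,
        if_pos (Finset.mem_insert_of_mem hj)]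
      simp
    · rw [if_neg hi, if_neg hj, LinearMap.map_smul, LinearMap.map_smul, xb, xb,
        Lop_single, Lop_single, one_smul, one_smul,
        if_neg (by simp [hj, (h.ne' : j ≠ i)] : ¬ j ∈ insert i S),
        if_neg (by simp [hi, (h.ne : i ≠ j)] : ¬ i ∈ insert j S),
        gamma_insert_lt β h S hi, gamma_insert_ge β (not_lt.mpr h.le) S,
        Finset.insert_comm]
      rw [smul_smul, smul_smul, smul_smul, smul_smul, smul_smul]
      ring_nf

noncomputable def Phi (β : Fin n → Fin n → K) :
    EAlg n K β →ₐ[K] Module.End K (Finset (Fin n) →₀ K) :=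
  RingQuot.liftAlgHom K ⟨FreeAlgebra.lift K (fun i => Lop β i), by
    intro x y h
    induction h with
    | sq i => simp [map_mul, FreeAlgebra.lift_ι_apply, Lop_sq]
    | @comm i j h =>
        simp only [map_mul, map_smul, FreeAlgebra.lift_ι_apply]
        exact Lop_comm β h⟩

lemma Phi_gen (β : Fin n → Fin n → K) (i : Fin n) : Phi β (gen β i) = Lop β i := by
  rw [gen, Phi, RingQuot.liftAlgHom_mkAlgHom_apply, FreeAlgebra.lift_ι_apply]

/-- products of generators over a list -/
noncomputable def elist (β : Fin n → Fin n → K) (l : List (Fin n)) : EAlg n K β :=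
  (l.map (gen β)).prod

lemma elist_nil (β : Fin n → Fin n → K) : elist β [] = 1 := rfl

lemma elist_cons (β : Fin n → Fin n → K) (a : Fin n) (l : List (Fin n)) :
    elist β (a :: l) = gen β a * elist β l := by
  rw [elist, List.map_cons, List.prod_cons, elist]

lemma elist_append (β : Fin n → Fin n → K) (l₁ l₂ : List (Fin n)) :
    elist β (l₁ ++ l₂) = elist β l₁ * elist β l₂ := by
  rw [elist, List.map_append, List.prod_append, elist, elist]

lemma eset_eq_elist (β : Fin n → Fin n → K) (S : Finset (Fin n)) :
    eset β S = elist β (S.sort (· ≤ ·)) := rfl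

lemma elist_singleton (β : Fin n → Fin n → K) (a : Fin n) : elist β [a] = gen β a := by
  rw [elist_cons, elist_nil, mul_one]

end ClsAux

namespace ClsAux

variable {n : ℕ} {K : Type*} [Field K]

lemma gamma_eq_one (β : Fin n → Fin n → K) (a : Fin n) {S : Finset (Fin n)}
    (h : ∀ s ∈ S, ¬ s < a) : gamma β a S = 1 := by
  rw [gamma, Finset.filter_eq_empty_iff.mpr h, Finset.prod_empty]

lemma Phi_elist_sorted_empty (β : Fin n → Fin n → K) :
    ∀ l : List (Fin n), l.Pairwise (· < ·) →
      Phi β (elist β l) (xb K ∅) = xb K l.toFinset := by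
  intro l
  induction l with
  | nil => intro _; simp [elist_nil, map_one]
  | cons a t ih =>
    intro hs
    rw [List.pairwise_cons] at hs
    rw [elist_cons, map_mul, Module.End.mul_apply, ih hs.2, Phi_gen, Lop_xb,
      if_neg (by simp only [List.mem_toFinset]; exact fun h => absurd h (fun h => lt_irrefl a (hs.1 a h))),
      gamma_eq_one β a (fun s hs' hlt => absurd (hs.1 s (List.mem_toFinset.mp hs')) (not_lt.mpr hlt.le)),
      one_smul, List.toFinset_cons]

lemma Phi_elist_ex (β : Fin n → Fin n → K) :
    ∀ l : List (Fin n), ∀ S : Finset (Fin n),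
      ∃ γ : K, Phi β (elist β l) (xb K S) = γ • xb K (l.toFinset ∪ S) := by
  intro l
  induction l with
  | nil => intro S; exact ⟨1, by simp [elist_nil, map_one]⟩
  | cons a t ih =>
    intro S
    obtain ⟨γ, hγ⟩ := ih S
    rw [elist_cons, map_mul, Module.End.mul_apply, hγ, LinearMap.map_smul, Phi_gen, Lop_xb]
    by_cases h : a ∈ t.toFinset ∪ S
    · exact ⟨0, by rw [if_pos h]; simp⟩
    · refine ⟨γ * gamma β a (t.toFinset ∪ S), ?_⟩
      rw [if_neg h, List.toFinset_cons, Finset.insert_union, smul_smul]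

lemma Phi_elist_overlap (β : Fin n → Fin n → K) :
    ∀ l : List (Fin n), ∀ S : Finset (Fin n), (∃ a ∈ l, a ∈ S) →
      Phi β (elist β l) (xb K S) = 0 := by
  intro l
  induction l with
  | nil => rintro S ⟨a, ha, -⟩; exact absurd ha (List.not_mem_nil)
  | cons b t ih =>
    rintro S ⟨a, hal, haS⟩
    rw [elist_cons, map_mul, Module.End.mul_apply]
    rcases List.mem_cons.mp hal with rfl | hat
    · obtain ⟨γ, hγ⟩ := Phi_elist_ex β t S
      rw [hγ, LinearMap.map_smul, Phi_gen, Lop_xb,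
        if_pos (Finset.mem_union_right _ haS)]
      simp
    · rw [ih S ⟨a, hat, haS⟩]; simp

lemma gen_sq (β : Fin n → Fin n → K) (a : Fin n) : gen β a * gen β a = 0 := by
  rw [gen, ← map_mul, RingQuot.mkAlgHom_rel K (ERel.sq a), map_zero]

lemma gen_swap (β : Fin n → Fin n → K) {i j : Fin n} (h : i < j) :
    gen β j * gen β i = β i j • (gen β i * gen β j) := by
  rw [gen, gen, ← map_mul, RingQuot.mkAlgHom_rel K (ERel.comm h), map_smul, map_mul]

lemma gen_mul_elist (β : Fin n → Fin n → K) (hβ : ∀ i j : Fin n, i < j → β i j ≠ 0) :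
    ∀ l : List (Fin n), l.Pairwise (· ≤ ·) → ∀ a : Fin n,
      (a ∈ l → gen β a * elist β l = 0) ∧
      (a ∉ l → ∃ γ : K, γ ≠ 0 ∧
        gen β a * elist β l = γ • elist β (l.orderedInsert (· ≤ ·) a)) := by
  intro l
  induction l with
  | nil =>
    intro _ a
    refine ⟨fun h => absurd h (List.not_mem_nil), fun _ => ⟨1, one_ne_zero, ?_⟩⟩
    rw [List.orderedInsert_nil, elist_singleton, elist_nil, mul_one, one_smul]
  | cons m t ih =>
    intro hs a
    rw [List.pairwise_cons] at hs
    have ihs := ih hs.2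
    constructor
    · intro hal
      rcases lt_trichotomy a m with hlt | rfl | hgt
      · rcases List.mem_cons.mp hal with rfl | hat
        · exact absurd hlt (lt_irrefl a)
        · exact absurd (hs.1 a hat) (not_le.mpr hlt)
      · rw [elist_cons, ← mul_assoc, gen_sq, zero_mul]
      · have hat : a ∈ t := by
          rcases List.mem_cons.mp hal with rfl | hat
          · exact absurd hgt (lt_irrefl a)
          · exact hat
        rw [elist_cons, ← mul_assoc, gen_swap β hgt, smul_mul_assoc, mul_assoc,
          (ihs a).1 hat, mul_zero, smul_zero]
    · intro hal
      rcases lt_trichotomy a m with hlt | rfl | hgt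
      · refine ⟨1, one_ne_zero, ?_⟩
        rw [List.orderedInsert, if_pos hlt.le, one_smul, ← elist_cons]
      · exact absurd List.mem_cons_self hal
      · have hat : a ∉ t := fun h => hal (List.mem_cons_of_mem m h)
        obtain ⟨γ, hγ0, hγ⟩ := (ihs a).2 hat
        refine ⟨β m a * γ, mul_ne_zero (hβ m a hgt) hγ0, ?_⟩
        rw [elist_cons, ← mul_assoc, gen_swap β hgt, smul_mul_assoc, mul_assoc, hγ,
          mul_smul_comm, ← smul_smul, List.orderedInsert, if_neg (not_le.mpr hgt), elist_cons]

lemma sort_insert_eq (a : Fin n) (S : Finset (Fin n)) (ha : a ∉ S) :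
    Finset.sort (insert a S) (· ≤ ·) = (Finset.sort S (· ≤ ·)).orderedInsert (· ≤ ·) a := by
  have hperm : ((Finset.sort S (· ≤ ·)).orderedInsert (· ≤ ·) a).toFinset = insert a S := by
    rw [List.toFinset_eq_of_perm _ _ (List.perm_orderedInsert _ a _), List.toFinset_cons,
      Finset.sort_toFinset]
  have hsorted : ((Finset.sort S (· ≤ ·)).orderedInsert (· ≤ ·) a).Pairwise (· ≤ ·) :=
    (Finset.pairwise_sort S (· ≤ ·)).orderedInsert a _
  rw [← hperm]
  exact (List.toFinset_sort (· ≤ ·) (by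
    rw [List.Perm.nodup_iff (List.perm_orderedInsert _ a _), List.nodup_cons]
    exact ⟨by simp [ha], Finset.sort_nodup S _⟩)).mpr hsorted

lemma gen_mul_eset_mem (β : Fin n → Fin n → K) (hβ : ∀ i j : Fin n, i < j → β i j ≠ 0)
    {a : Fin n} {S : Finset (Fin n)} (ha : a ∈ S) : gen β a * eset β S = 0 := by
  rw [eset_eq_elist]
  exact (gen_mul_elist β hβ _ (Finset.pairwise_sort S _) a).1 ((Finset.mem_sort _).mpr ha)

lemma gen_mul_eset (β : Fin n → Fin n → K) (hβ : ∀ i j : Fin n, i < j → β i j ≠ 0)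
    {a : Fin n} {S : Finset (Fin n)} (ha : a ∉ S) :
    ∃ γ : K, γ ≠ 0 ∧ gen β a * eset β S = γ • eset β (insert a S) := by
  obtain ⟨γ, h0, hγ⟩ := (gen_mul_elist β hβ _ (Finset.pairwise_sort S (· ≤ ·)) a).2
    (fun h => ha ((Finset.mem_sort _).mp h))
  exact ⟨γ, h0, by rw [eset_eq_elist, hγ, eset_eq_elist, sort_insert_eq a S ha]⟩

lemma elist_norm (β : Fin n → Fin n → K) (hβ : ∀ i j : Fin n, i < j → β i j ≠ 0) :
    ∀ l : List (Fin n),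
      (¬ l.Nodup → elist β l = 0) ∧
      (l.Nodup → ∃ γ : K, γ ≠ 0 ∧ elist β l = γ • eset β l.toFinset) := by
  intro l
  induction l with
  | nil =>
    refine ⟨fun h => absurd List.nodup_nil h, fun _ => ⟨1, one_ne_zero, ?_⟩⟩
    rw [elist_nil, List.toFinset_nil, one_smul, eset_eq_elist, Finset.sort_empty, elist_nil]
  | cons a t ih =>
    by_cases ht : t.Nodup
    · obtain ⟨γ, h0, hγ⟩ := ih.2 ht
      constructor
      · intro hnd
        have hat : a ∈ t := by
          by_contra hat
          exact hnd (List.nodup_cons.mpr ⟨hat, ht⟩)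
        rw [elist_cons, hγ, mul_smul_comm,
          gen_mul_eset_mem β hβ (List.mem_toFinset.mpr hat), smul_zero]
      · intro hnd
        have hat : a ∉ t := (List.nodup_cons.mp hnd).1
        obtain ⟨γ', h0', hγ'⟩ := gen_mul_eset β hβ (S := t.toFinset)
          (fun h => hat (List.mem_toFinset.mp h))
        refine ⟨γ * γ', mul_ne_zero h0 h0', ?_⟩
        rw [elist_cons, hγ, mul_smul_comm, hγ', List.toFinset_cons, smul_smul, mul_comm γ γ']
    · refine ⟨fun _ => ?_, fun hnd => absurd (List.nodup_cons.mp hnd).2 ht⟩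
      rw [elist_cons, ih.1 ht, mul_zero]

lemma eset_mul_eset (β : Fin n → Fin n → K) (hβ : ∀ i j : Fin n, i < j → β i j ≠ 0)
    {A B : Finset (Fin n)} (hd : Disjoint A B) :
    ∃ γ : K, γ ≠ 0 ∧ eset β A * eset β B = γ • eset β (A ∪ B) := by
  have h1 : eset β A * eset β B = elist β (Finset.sort A (· ≤ ·) ++ Finset.sort B (· ≤ ·)) := by
    rw [elist_append, eset_eq_elist, eset_eq_elist]
  have hnd : (Finset.sort A (· ≤ ·) ++ Finset.sort B (· ≤ ·)).Nodup := by
    rw [List.nodup_append']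
    refine ⟨Finset.sort_nodup A _, Finset.sort_nodup B _, fun a ha hb => ?_⟩
    exact Finset.disjoint_left.mp hd ((Finset.mem_sort _).mp ha) ((Finset.mem_sort _).mp hb)
  obtain ⟨γ, h0, hγ⟩ := (elist_norm β hβ _).2 hnd
  refine ⟨γ, h0, ?_⟩
  rw [h1, hγ, List.toFinset_append, Finset.sort_toFinset, Finset.sort_toFinset]

lemma eset_mul_gen_mem (β : Fin n → Fin n → K) (hβ : ∀ i j : Fin n, i < j → β i j ≠ 0)
    {a : Fin n} {T : Finset (Fin n)} (ha : a ∈ T) : eset β T * gen β a = 0 := by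
  have h1 : eset β T * gen β a = elist β (Finset.sort T (· ≤ ·) ++ [a]) := by
    rw [elist_append, eset_eq_elist, elist_singleton]
  rw [h1]
  refine (elist_norm β hβ _).1 (fun hnd => ?_)
  rcases List.nodup_append'.mp hnd with ⟨-, -, hd⟩
  exact hd ((Finset.mem_sort _).mpr ha) (List.mem_singleton_self a)

lemma eset_mul_gen (β : Fin n → Fin n → K) (hβ : ∀ i j : Fin n, i < j → β i j ≠ 0)
    {a : Fin n} {T : Finset (Fin n)} (ha : a ∉ T) :
    ∃ γ : K, γ ≠ 0 ∧ eset β T * gen β a = γ • eset β (insert a T) := by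
  have h1 : eset β T * gen β a = elist β (Finset.sort T (· ≤ ·) ++ [a]) := by
    rw [elist_append, eset_eq_elist, elist_singleton]
  have hnd : (Finset.sort T (· ≤ ·) ++ [a]).Nodup := by
    rw [List.nodup_append']
    refine ⟨Finset.sort_nodup T _, List.nodup_singleton a, fun b hb hb' => ?_⟩
    rw [List.mem_singleton] at hb'
    subst hb'
    exact ha ((Finset.mem_sort _).mp hb)
  obtain ⟨γ, h0, hγ⟩ := (elist_norm β hβ _).2 hnd
  refine ⟨γ, h0, ?_⟩
  have he : T ∪ (insert a ∅ : Finset (Fin n)) = insert a T := by ext b; simp [or_comm]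
  rw [h1, hγ, List.toFinset_append, Finset.sort_toFinset, List.toFinset_cons, List.toFinset_nil, he]

lemma Phi_eset_empty (β : Fin n → Fin n → K) (S : Finset (Fin n)) :
    Phi β (eset β S) (xb K ∅) = xb K S := by
  rw [eset_eq_elist, Phi_elist_sorted_empty β _ (Finset.sortedLT_sort S).pairwise, Finset.sort_toFinset]

end ClsAux

namespace ClsAux

variable {n : ℕ} {K : Type*} [Field K]

section Lists

variable {M' : Type*} [AddCommMonoid M']

lemma enumFrom_map_sum :
    ∀ (t : List (Fin n)) (k : ℕ) (g : ℕ → Fin n → M'),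
      ((t.enumFrom k).map (fun pi => g pi.1 pi.2)).sum
        = ((t.enum).map (fun pi => g (pi.1 + k) pi.2)).sum := by
  intro t
  induction t with
  | nil => intro k g; rfl
  | cons a t ih =>
    intro k g
    have h1 := ih (k + 1) g
    have h2 := ih 1 (fun p i => g (p + k) i)
    simp only [List.enumFrom_cons, List.enum_cons, List.map_cons, List.sum_cons] at *
    rw [h1, h2]
    simp only [Nat.zero_add]
    congr 1
    apply congrArg List.sum
    apply List.map_congr_left
    intro b _
    have hb : b.1 + (k + 1) = b.1 + 1 + k := by omega
    rw [hb]

lemma mem_of_mem_enum {l : List (Fin n)} {pi : ℕ × Fin n} (h : pi ∈ l.enum) : pi.2 ∈ l := by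
  obtain ⟨q, hq, rfl⟩ := List.mem_map.mp h
  exact List.fst_mem_of_mem_zipIdx hq

lemma enum_sum_eq :
    ∀ (l : List (Fin n)), l.Pairwise (· < ·) → ∀ (g : ℕ → Fin n → M'),
      ((l.enum.map fun pi => g pi.1 pi.2).sum
        = ∑ i ∈ l.toFinset, g ((l.toFinset.filter (· < i)).card) i) := by
  intro l
  induction l with
  | nil => intro _ g; simp
  | cons a t ih =>
    intro hs g
    rw [List.pairwise_cons] at hs
    have hat : a ∉ t.toFinset := by
      simp only [List.mem_toFinset]
      exact fun h => lt_irrefl a (hs.1 a h)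
    rw [List.enum_cons, List.map_cons, List.sum_cons,
      enumFrom_map_sum t 1 g, List.toFinset_cons, Finset.sum_insert hat,
      ih hs.2 (fun p i => g (p + 1) i)]
    congr 1
    · show g 0 a = _
      apply congrArg (fun m => g m a)
      symm
      rw [Finset.card_eq_zero, Finset.filter_eq_empty_iff]
      intro w hw
      rcases Finset.mem_insert.mp hw with rfl | hw'
      · exact lt_irrefl _
      · exact fun hlt => absurd (hs.1 w (List.mem_toFinset.mp hw')) (not_lt.mpr hlt.le)
    · apply Finset.sum_congr rfl
      intro i hi
      apply congrArg (fun m => g m i)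
      have hai : a < i := hs.1 i (List.mem_toFinset.mp hi)
      rw [Finset.filter_insert, if_pos hai,
        Finset.card_insert_of_notMem (fun h => hat (Finset.mem_of_mem_filter a h))]

end Lists

section MatroidLemmas

variable {M : Matroid (Fin n)}

lemma finset_subset_ground (hE : M.E = Set.univ) (S : Finset (Fin n)) : (↑S : Set (Fin n)) ⊆ M.E := by
  rw [hE]; exact Set.subset_univ _

lemma indep_of_not_dep (hE : M.E = Set.univ) {S : Finset (Fin n)} (h : ¬ M.Dep ↑S) : M.Indep ↑S := by
  by_contra hi
  exact h (Matroid.dep_iff.mpr ⟨hi, finset_subset_ground hE S⟩)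

lemma circuit_erase_indep (hE : M.E = Set.univ) {C : Finset (Fin n)} {i : Fin n} (hC : IsCircuit M C) (hi : i ∈ C) :
    M.Indep ↑(C.erase i) := by
  exact indep_of_not_dep hE (hC.2 _ (Finset.erase_ssubset hi))

lemma circuit_mem_closure (hE : M.E = Set.univ) {C : Finset (Fin n)} {i : Fin n} (hC : IsCircuit M C) (hi : i ∈ C) :
    i ∈ M.closure ↑(C.erase i) := by
  by_contra h
  have hIe := circuit_erase_indep hE hC hi
  have : M.Indep (insert i ↑(C.erase i)) :=
    hIe.insert_indep_iff.mpr (Or.inl ⟨by rw [hE]; trivial, h⟩)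
  rw [Finset.coe_erase, Set.insert_diff_singleton, Set.insert_eq_self.mpr (by exact_mod_cast hi)]
    at this
  exact hC.1.not_indep this

lemma not_indep_of_circuit_subset (hE : M.E = Set.univ) {C T : Finset (Fin n)} (hC : IsCircuit M C) (h : C ⊆ T) :
    ¬ M.Indep ↑T :=
  (hC.1.superset (by exact_mod_cast h) (finset_subset_ground hE T)).not_indep

lemma exists_circuit_subset (hE : M.E = Set.univ) :
    ∀ X : Finset (Fin n), ¬ M.Indep ↑X → ∃ C, C ⊆ X ∧ IsCircuit M C := by
  intro X
  induction X using Finset.strongInductionOn with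
  | _ X ih =>
    intro hX
    by_cases h : ∀ D : Finset (Fin n), D ⊂ X → ¬ M.Dep ↑D
    · exact ⟨X, Finset.Subset.refl X,
        Matroid.dep_iff.mpr ⟨hX, finset_subset_ground hE X⟩, h⟩
    · push_neg at h
      obtain ⟨D, hD, hdep⟩ := h
      obtain ⟨C, hC1, hC2⟩ := ih D hD hdep.not_indep
      exact ⟨C, hC1.trans hD.subset, hC2⟩

lemma closure_insert_of_mem (hE : M.E = Set.univ) {e : Fin n} {s : Set (Fin n)} (he : e ∈ M.closure s) :
    M.closure (insert e s) = M.closure s := by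
  refine subset_antisymm ?_ (M.closure_subset_closure (Set.subset_insert _ _))
  have h1 : insert e s ⊆ M.closure s :=
    Set.insert_subset he (M.subset_closure s (by rw [hE]; exact Set.subset_univ _))
  have h2 := M.closure_subset_closure h1
  rwa [M.closure_closure] at h2

lemma unique_circuit_of_erase_indep (hE : M.E = Set.univ) {U : Finset (Fin n)} {i₀ : Fin n}
    (hI : M.Indep ↑(U.erase i₀)) {C₁ C₂ : Finset (Fin n)}
    (h₁ : C₁ ⊆ U) (hc₁ : IsCircuit M C₁) (h₂ : C₂ ⊆ U) (hc₂ : IsCircuit M C₂) : C₁ = C₂ := by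
  have hmem : ∀ C : Finset (Fin n), C ⊆ U → IsCircuit M C → i₀ ∈ C := by
    intro C hCU hC
    by_contra hiC
    exact hC.1.not_indep (hI.subset (by
      intro x hx
      simp only [Finset.coe_erase, Set.mem_diff, Set.mem_singleton_iff]
      refine ⟨by exact_mod_cast hCU (by exact_mod_cast hx), ?_⟩
      rintro rfl
      exact hiC (by exact_mod_cast hx)))
  by_contra hne
  -- find x ∈ C₁ \ C₂
  have hxex : ∃ x, x ∈ C₁ ∧ x ∉ C₂ := by
    by_contra hsub
    push_neg at hsub
    have hss : C₁ ⊂ C₂ := by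
      refine (Finset.ssubset_iff_of_subset hsub).mpr ?_
      by_contra hno
      push_neg at hno
      exact hne (Finset.Subset.antisymm hsub hno)
    exact hc₂.2 C₁ hss hc₁.1
  obtain ⟨x, hx₁, hx₂⟩ := hxex
  have hxi₀ : x ≠ i₀ := fun h => hx₂ (h ▸ hmem C₂ h₂ hc₂)
  set J : Finset (Fin n) := (C₁ ∪ C₂).erase i₀ with hJ
  have hJU : J ⊆ U.erase i₀ :=
    Finset.erase_subset_erase _ (Finset.union_subset h₁ h₂)
  have hJindep : M.Indep ↑J := hI.subset (by exact_mod_cast hJU)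
  have hxJ : x ∈ J := Finset.mem_erase.mpr ⟨hxi₀, Finset.mem_union_left _ hx₁⟩
  have hsub1 : (↑(C₁.erase x) : Set (Fin n)) ⊆ insert i₀ (↑J \ {x}) := by
    intro w hw
    rcases Finset.mem_erase.mp (by exact_mod_cast hw) with ⟨hwx, hwC₁⟩
    by_cases hwi : w = i₀
    · exact Or.inl hwi
    · exact Or.inr ⟨by
        exact_mod_cast Finset.mem_erase.mpr ⟨hwi, Finset.mem_union_left _ hwC₁⟩,
        by simpa using hwx⟩
  have hsub2 : (↑(C₂.erase i₀) : Set (Fin n)) ⊆ ↑J \ {x} := by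
    intro w hw
    rcases Finset.mem_erase.mp (by exact_mod_cast hw) with ⟨hwi, hwC₂⟩
    refine ⟨by exact_mod_cast Finset.mem_erase.mpr ⟨hwi, Finset.mem_union_right _ hwC₂⟩, ?_⟩
    simp only [Set.mem_singleton_iff]
    rintro rfl
    exact hx₂ hwC₂
  have hi₀cl : i₀ ∈ M.closure (↑J \ {x}) :=
    M.closure_subset_closure hsub2 (circuit_mem_closure hE hc₂ (hmem C₂ h₂ hc₂))
  have hxcl : x ∈ M.closure (↑J \ {x}) := by
    have h1 : x ∈ M.closure ↑(C₁.erase x) := circuit_mem_closure hE hc₁ hx₁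
    have h2 := M.closure_subset_closure hsub1 h1
    rwa [closure_insert_of_mem hE hi₀cl] at h2
  exact hJindep.notMem_closure_diff_of_mem hxJ hxcl

end MatroidLemmas

end ClsAux

namespace ClsAux

variable {n : ℕ} {K : Type*} [Field K]

noncomputable def posIn (U : Finset (Fin n)) (i : Fin n) : ℕ := (U.filter (· < i)).card

lemma posIn_lt_card {X : Finset (Fin n)} {i : Fin n} (hi : i ∈ X) : posIn X i < X.card := by
  apply Finset.card_lt_card
  rw [Finset.ssubset_iff_of_subset (Finset.filter_subset _ _)]
  exact ⟨i, hi, by simp⟩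

lemma posIn_strict {X : Finset (Fin n)} {i j : Fin n} (hij : i < j) (hi : i ∈ X) :
    posIn X i < posIn X j := by
  apply Finset.card_lt_card
  rw [Finset.ssubset_iff_of_subset (fun w hw => Finset.mem_filter.mpr
    ⟨(Finset.mem_filter.mp hw).1, lt_trans (Finset.mem_filter.mp hw).2 hij⟩)]
  exact ⟨i, Finset.mem_filter.mpr ⟨hi, hij⟩, by simp⟩

noncomputable def FFlat (M : Matroid (Fin n)) (X : Finset (Fin n)) (j : ℕ) : Set (Fin n) :=
  M.closure ↑(X.filter fun w => posIn X w < j)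

lemma FFlat_mono (M : Matroid (Fin n)) (X : Finset (Fin n)) {j j' : ℕ} (h : j ≤ j') :
    FFlat M X j ⊆ FFlat M X j' := by
  apply M.closure_subset_closure
  exact_mod_cast (fun w hw => Finset.mem_filter.mpr
    ⟨(Finset.mem_filter.mp hw).1, lt_of_lt_of_le (Finset.mem_filter.mp hw).2 h⟩ :
    X.filter (fun w => posIn X w < j) ⊆ X.filter (fun w => posIn X w < j'))

lemma FFlat_zero (M : Matroid (Fin n)) (X : Finset (Fin n)) : FFlat M X 0 = M.closure ∅ := by
  rw [FFlat, Finset.filter_eq_empty_iff.mpr (fun w _ => Nat.not_lt_zero _), Finset.coe_empty]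

lemma FFlat_card_le (M : Matroid (Fin n)) (X : Finset (Fin n)) {j : ℕ} (h : X.card ≤ j) :
    FFlat M X j = M.closure ↑X := by
  rw [FFlat, Finset.filter_true_of_mem (fun w hw => lt_of_lt_of_le (posIn_lt_card hw) h)]

noncomputable def lay (M : Matroid (Fin n)) (X : Finset (Fin n)) (t : Fin n) : ℕ :=
  sInf {j | t ∈ FFlat M X j ∨ j = X.card + 1}

lemma lay_le (M : Matroid (Fin n)) (X : Finset (Fin n)) {t : Fin n} {j : ℕ}
    (h : t ∈ FFlat M X j) : lay M X t ≤ j :=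
  Nat.sInf_le (Or.inl h)

lemma mem_FFlat_lay (M : Matroid (Fin n)) (X : Finset (Fin n)) {t : Fin n}
    (h : lay M X t ≤ X.card) : t ∈ FFlat M X (lay M X t) := by
  have hne : {j | t ∈ FFlat M X j ∨ j = X.card + 1}.Nonempty := ⟨X.card + 1, Or.inr rfl⟩
  rcases Nat.sInf_mem hne with hm | hm
  · exact hm
  · rw [lay] at h; omega
  -- note: `lay M X t` is the sInf

lemma not_mem_FFlat (M : Matroid (Fin n)) (X : Finset (Fin n)) {t : Fin n} {j : ℕ}
    (h : j < lay M X t) : t ∉ FFlat M X j :=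
  fun hm => absurd (lay_le M X hm) (not_le.mpr h)

lemma lay_pos (M : Matroid (Fin n)) (X : Finset (Fin n)) {t : Fin n}
    (h : t ∉ M.closure ∅) : 1 ≤ lay M X t := by
  by_contra hc
  push_neg at hc
  rw [Nat.lt_one_iff] at hc
  have hne : {j | t ∈ FFlat M X j ∨ j = X.card + 1}.Nonempty := ⟨X.card + 1, Or.inr rfl⟩
  have := Nat.sInf_mem hne
  rw [show sInf {j | t ∈ FFlat M X j ∨ j = X.card + 1} = lay M X t from rfl, hc] at this
  rcases this with hm | hm
  · rw [FFlat_zero] at hm; exact h hm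
  · omega

def Trans (M : Matroid (Fin n)) (X T : Finset (Fin n)) : Prop :=
  T.card = X.card ∧ (∀ t ∈ T, 1 ≤ lay M X t ∧ lay M X t ≤ X.card) ∧
    Set.InjOn (lay M X) ↑T

lemma trans_indep {M : Matroid (Fin n)} (hE : M.E = Set.univ) {X T : Finset (Fin n)}
    (hT : Trans M X T) : M.Indep ↑T := by
  obtain ⟨hcard, hrange, hinj⟩ := hT
  suffices h : ∀ j : ℕ, M.Indep ↑(T.filter fun t => lay M X t ≤ j) ∧
      ↑(T.filter fun t => lay M X t ≤ j) ⊆ FFlat M X j by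
    have h2 := (h X.card).1
    rwa [Finset.filter_true_of_mem (fun t ht => (hrange t ht).2)] at h2
  intro j
  induction j with
  | zero =>
    have he : T.filter (fun t => lay M X t ≤ 0) = ∅ :=
      Finset.filter_eq_empty_iff.mpr (fun t ht h0 => by
        have := (hrange t ht).1; omega)
    rw [he]
    exact ⟨by simpa using M.empty_indep, by simp⟩
  | succ j ih =>
    by_cases hex : ∃ t ∈ T, lay M X t = j + 1
    · obtain ⟨ts, hts, hlts⟩ := hex
      have hset : T.filter (fun t => lay M X t ≤ j + 1)
          = insert ts (T.filter fun t => lay M X t ≤ j) := by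
        ext w
        simp only [Finset.mem_filter, Finset.mem_insert]
        constructor
        · rintro ⟨hwT, hwle⟩
          by_cases hwj : lay M X w ≤ j
          · exact Or.inr ⟨hwT, hwj⟩
          · exact Or.inl (hinj (by exact_mod_cast hwT) (by exact_mod_cast hts)
              (by omega : lay M X w = lay M X ts))
        · rintro (rfl | ⟨hwT, hwj⟩)
          · exact ⟨hts, le_of_eq hlts⟩
          · exact ⟨hwT, hwj.trans (Nat.le_succ j)⟩
      have hnotmem : ts ∉ T.filter fun t => lay M X t ≤ j := by
        simp only [Finset.mem_filter]
        rintro ⟨-, hle⟩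
        omega
      have hcl : (ts : Fin n) ∉ M.closure ↑(T.filter fun t => lay M X t ≤ j) := by
        intro hmem
        have h1 : M.closure ↑(T.filter fun t => lay M X t ≤ j) ⊆ FFlat M X j := by
          have := M.closure_subset_closure ih.2
          rwa [show M.closure (FFlat M X j) = FFlat M X j from M.closure_closure _] at this
        exact not_mem_FFlat M X (by omega : j < lay M X ts) (h1 hmem)
      have hindep : M.Indep ↑(insert ts (T.filter fun t => lay M X t ≤ j)) := by
        rw [Finset.coe_insert]
        exact ih.1.insert_indep_iff.mpr (Or.inl ⟨by rw [hE]; trivial, hcl⟩)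
      constructor
      · rw [hset]; exact hindep
      · rw [hset, Finset.coe_insert]
        apply Set.insert_subset
        · rw [← hlts]
          exact mem_FFlat_lay M X ((hrange ts hts).2)
        · exact ih.2.trans (FFlat_mono M X (Nat.le_succ j))
    · push_neg at hex
      have hset : T.filter (fun t => lay M X t ≤ j + 1) = T.filter fun t => lay M X t ≤ j := by
        apply Finset.filter_congr
        intro t ht
        have := hex t ht
        constructor <;> intro h <;> omega
      rw [hset]
      exact ⟨ih.1, ih.2.trans (FFlat_mono M X (Nat.le_succ j))⟩

lemma trans_subset_FFlat {M : Matroid (Fin n)} {X T : Finset (Fin n)}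
    (hT : Trans M X T) : (↑T : Set (Fin n)) ⊆ FFlat M X X.card := by
  intro t ht
  have ht' : t ∈ T := by exact_mod_cast ht
  exact FFlat_mono M X (hT.2.1 t ht').2 (mem_FFlat_lay M X (hT.2.1 t ht').2)

lemma lay_mem_X {M : Matroid (Fin n)} (hE : M.E = Set.univ) {X : Finset (Fin n)}
    (hX : M.Indep ↑X) {i : Fin n} (hi : i ∈ X) : lay M X i = posIn X i + 1 := by
  have hup : lay M X i ≤ posIn X i + 1 := by
    apply lay_le
    apply M.subset_closure _ (by rw [hE]; exact Set.subset_univ _)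
    exact_mod_cast Finset.mem_filter.mpr ⟨hi, Nat.lt_succ_self _⟩
  have hdown : posIn X i < lay M X i := by
    by_contra hc
    push_neg at hc
    have hmem : i ∈ FFlat M X (posIn X i) := by
      apply FFlat_mono M X hc
      exact mem_FFlat_lay M X (hc.trans (posIn_lt_card hi).le)
    have hsub : (↑(X.filter fun w => posIn X w < posIn X i) : Set (Fin n)) ⊆ ↑X \ {i} := by
      intro w hw
      rcases Finset.mem_filter.mp (by exact_mod_cast hw) with ⟨hwX, hwlt⟩
      exact ⟨by exact_mod_cast hwX, by
        simp only [Set.mem_singleton_iff]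
        rintro rfl
        exact lt_irrefl _ hwlt⟩
    have := M.closure_subset_closure hsub hmem
    exact hX.notMem_closure_diff_of_mem (by exact_mod_cast hi) this
  omega

lemma trans_X {M : Matroid (Fin n)} (hE : M.E = Set.univ) {X : Finset (Fin n)}
    (hX : M.Indep ↑X) : Trans M X X := by
  refine ⟨rfl, fun t ht => ?_, fun s hs t ht hst => ?_⟩
  · rw [lay_mem_X hE hX ht]
    have := posIn_lt_card ht
    omega
  · have hs' : s ∈ X := by exact_mod_cast hs
    have ht' : t ∈ X := by exact_mod_cast ht
    rw [lay_mem_X hE hX hs', lay_mem_X hE hX ht'] at hst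
    by_contra hne
    rcases lt_or_gt_of_ne hne with h | h
    · exact absurd (posIn_strict h hs') (by omega)
    · exact absurd (posIn_strict h ht') (by omega)

noncomputable def invT (M : Matroid (Fin n)) (X T : Finset (Fin n)) : ℕ :=
  ∑ s ∈ T, ∑ t ∈ T, if s < t ∧ lay M X t < lay M X s then 1 else 0

lemma invT_X {M : Matroid (Fin n)} (hE : M.E = Set.univ) {X : Finset (Fin n)}
    (hX : M.Indep ↑X) : invT M X X = 0 := by
  apply Finset.sum_eq_zero
  intro s hs
  apply Finset.sum_eq_zero
  intro t ht
  rw [if_neg]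
  rintro ⟨hst, hlay⟩
  rw [lay_mem_X hE hX hs, lay_mem_X hE hX ht] at hlay
  exact absurd (posIn_strict hst hs) (by omega)

open Classical in
noncomputable def cfun (M : Matroid (Fin n)) (χ : Finset (Fin n) → K) (X T : Finset (Fin n)) :
    K :=
  if Trans M X T then (-1 : K) ^ (invT M X T) * (χ T)⁻¹ else 0

lemma cfun_of_not_indep {M : Matroid (Fin n)} (hE : M.E = Set.univ)
    (χ : Finset (Fin n) → K) {X T : Finset (Fin n)} (h : ¬ M.Indep ↑T) :
    cfun M χ X T = 0 := by
  rw [cfun, if_neg (fun hT => h (trans_indep hE hT))]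

lemma cfun_of_not_trans {M : Matroid (Fin n)} (χ : Finset (Fin n) → K)
    {X T : Finset (Fin n)} (h : ¬ Trans M X T) : cfun M χ X T = 0 := by
  rw [cfun, if_neg h]

noncomputable def ccf (M : Matroid (Fin n)) (χ : Finset (Fin n) → K) (X : Finset (Fin n)) :
    (Finset (Fin n) →₀ K) →ₗ[K] K :=
  Finsupp.linearCombination K (cfun M χ X)

lemma ccf_xb (M : Matroid (Fin n)) (χ : Finset (Fin n) → K) (X T : Finset (Fin n)) :
    ccf M χ X (xb K T) = cfun M χ X T := by
  rw [xb, ccf, Finsupp.linearCombination_single, one_smul]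

noncomputable def bigF (β : Fin n → Fin n → K) (M : Matroid (Fin n))
    (χ : Finset (Fin n) → K) (X S : Finset (Fin n)) : EAlg n K β →ₗ[K] K where
  toFun z := ccf M χ X (Phi β z (xb K S))
  map_add' x y := by
    show ccf M χ X (Phi β (x + y) (xb K S)) = _
    rw [map_add, LinearMap.add_apply, map_add]
  map_smul' c x := by
    show ccf M χ X (Phi β (c • x) (xb K S)) = _
    rw [map_smul, LinearMap.smul_apply, map_smul]
    simp

lemma bigF_apply (β : Fin n → Fin n → K) (M : Matroid (Fin n))
    (χ : Finset (Fin n) → K) (X S : Finset (Fin n)) (z : EAlg n K β) :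
    bigF β M χ X S z = ccf M χ X (Phi β z (xb K S)) := rfl

lemma bigF_bdry (β : Fin n → Fin n → K) (M : Matroid (Fin n))
    (χ : Finset (Fin n) → K) (X S C : Finset (Fin n)) :
    bigF β M χ X S (bdry β χ C)
      = (((C.sort (· ≤ ·)).enum).map (fun pi =>
          ((-1 : K) ^ (pi.1 + 1) * χ (C.erase pi.2)) *
            ccf M χ X (Phi β (eset β (C.erase pi.2)) (xb K S)))).sum := by
  rw [bdry_enum, map_list_sum, List.map_map]
  congr 1
  apply List.map_congr_left
  intro pi _
  show bigF β M χ X S (((-1 : K) ^ (pi.1 + 1) * χ (C.erase pi.2)) • eset β (C.erase pi.2)) = _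
  rw [map_smul, smul_eq_mul, bigF_apply]

lemma FF_bdry (β : Fin n → Fin n → K) (M : Matroid (Fin n))
    (χ : Finset (Fin n) → K) (X U : Finset (Fin n)) :
    bigF β M χ X ∅ (bdry β χ U)
      = ∑ i ∈ U, (-1 : K) ^ (posIn U i + 1) * χ (U.erase i) * cfun M χ X (U.erase i) := by
  rw [bigF_bdry]
  have hterm : ∀ pi ∈ (U.sort (· ≤ ·)).enum,
      ((-1 : K) ^ (pi.1 + 1) * χ (U.erase pi.2)) *
          ccf M χ X (Phi β (eset β (U.erase pi.2)) (xb K ∅))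
        = (fun p i => (-1 : K) ^ (p + 1) * χ (U.erase i) * cfun M χ X (U.erase i)) pi.1 pi.2 := by
    intro pi _
    rw [Phi_eset_empty, ccf_xb]
  rw [List.map_congr_left hterm,
    enum_sum_eq (U.sort (· ≤ ·)) (Finset.sortedLT_sort U).pairwise
      (fun p i => (-1 : K) ^ (p + 1) * χ (U.erase i) * cfun M χ X (U.erase i)),
    Finset.sort_toFinset]
  rfl

end ClsAux

namespace ClsAux

variable {n : ℕ} {K : Type*} [Field K]

lemma invT_insert (M : Matroid (Fin n)) (X : Finset (Fin n)) {T : Finset (Fin n)} {a : Fin n}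
    (ha : a ∉ T) :
    invT M X (insert a T) = invT M X T
      + ∑ w ∈ T, ((if a < w ∧ lay M X w < lay M X a then (1 : ℕ) else 0)
                + (if w < a ∧ lay M X a < lay M X w then 1 else 0)) := by
  rw [invT, Finset.sum_insert ha, Finset.sum_insert ha,
    if_neg (by simp : ¬ (a < a ∧ lay M X a < lay M X a)), zero_add,
    Finset.sum_congr rfl (fun s _ => Finset.sum_insert ha (f := fun t =>
      if s < t ∧ lay M X t < lay M X s then (1 : ℕ) else 0)),
    Finset.sum_add_distrib, Finset.sum_add_distrib, invT]
  ring

lemma parity_main (M : Matroid (Fin n)) (X U : Finset (Fin n)) {u v : Fin n}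
    (hu : u ∈ U) (hv : v ∈ U) (huv : u < v) (hl : lay M X u = lay M X v)
    (hW : ∀ w ∈ U, w ≠ u → w ≠ v → lay M X w ≠ lay M X u) :
    Odd ((posIn U u + 1 + invT M X (U.erase u))
        + (posIn U v + 1 + invT M X (U.erase v))) := by
  classical
  set W' : Finset (Fin n) := (U.erase u).erase v with hW'def
  have hvW : v ∉ W' := Finset.notMem_erase _ _
  have hermut : (U.erase v).erase u = W' := by
    ext w; simp only [hW'def, Finset.mem_erase]; tauto
  have huW : u ∉ W' := by rw [← hermut]; exact Finset.notMem_erase _ _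
  have hWU : ∀ w ∈ W', w ∈ U ∧ w ≠ u ∧ w ≠ v := by
    intro w hw
    simp only [hW'def, Finset.mem_erase] at hw
    exact ⟨hw.2.2, hw.2.1, hw.1⟩
  have hUu : U.erase u = insert v W' :=
    (Finset.insert_erase (Finset.mem_erase.mpr ⟨huv.ne', hv⟩)).symm
  have hUv : U.erase v = insert u W' := by
    rw [← hermut]
    exact (Finset.insert_erase (Finset.mem_erase.mpr ⟨huv.ne, hu⟩)).symm
  have hinvu : invT M X (U.erase u) = invT M X W'
      + ∑ w ∈ W', ((if v < w ∧ lay M X w < lay M X v then (1 : ℕ) else 0)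
                 + (if w < v ∧ lay M X v < lay M X w then 1 else 0)) := by
    rw [hUu, invT_insert M X hvW]
  have hinvv : invT M X (U.erase v) = invT M X W'
      + ∑ w ∈ W', ((if u < w ∧ lay M X w < lay M X u then (1 : ℕ) else 0)
                 + (if w < u ∧ lay M X u < lay M X w then 1 else 0)) := by
    rw [hUv, invT_insert M X huW]
  have hsplit : U.filter (· < v) = U.filter (· < u) ∪ U.filter (fun w => u ≤ w ∧ w < v) := by
    ext w
    simp only [Finset.mem_union, Finset.mem_filter]
    constructor
    · rintro ⟨hwU, hwv⟩
      rcases lt_or_ge w u with h | h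
      · exact Or.inl ⟨hwU, h⟩
      · exact Or.inr ⟨hwU, h, hwv⟩
    · rintro (⟨hwU, h⟩ | ⟨hwU, h1, h2⟩)
      · exact ⟨hwU, h.trans huv⟩
      · exact ⟨hwU, h2⟩
  have hdisj : Disjoint (U.filter (· < u)) (U.filter (fun w => u ≤ w ∧ w < v)) := by
    rw [Finset.disjoint_left]
    intro w h1 h2
    exact absurd (Finset.mem_filter.mp h2).2.1 (not_le.mpr (Finset.mem_filter.mp h1).2)
  have hmidins : U.filter (fun w => u ≤ w ∧ w < v)
      = insert u (W'.filter (fun w => u < w ∧ w < v)) := by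
    ext w
    simp only [Finset.mem_insert, Finset.mem_filter]
    constructor
    · rintro ⟨hwU, h1, h2⟩
      rcases eq_or_lt_of_le h1 with heq | h1'
      · exact Or.inl heq.symm
      · refine Or.inr ⟨?_, h1', h2⟩
        simp only [hW'def, Finset.mem_erase]
        exact ⟨h2.ne, h1'.ne', hwU⟩
    · rintro (rfl | ⟨hwW, h1, h2⟩)
      · exact ⟨hu, le_refl _, huv⟩
      · exact ⟨(hWU w hwW).1, h1.le, h2⟩
  have humid : u ∉ W'.filter (fun w => u < w ∧ w < v) :=
    fun h => absurd (Finset.mem_filter.mp h).2.1 (lt_irrefl u)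
  have hpos : posIn U v = posIn U u + 1
      + (W'.filter (fun w => u < w ∧ w < v)).card := by
    rw [posIn, hsplit, Finset.card_union_of_disjoint hdisj, hmidins,
      Finset.card_insert_of_notMem humid, posIn]
    ring
  have heven : Even ((∑ w ∈ W', ((if u < w ∧ lay M X w < lay M X u then (1 : ℕ) else 0)
                 + (if w < u ∧ lay M X u < lay M X w then 1 else 0)))
      + ((∑ w ∈ W', ((if v < w ∧ lay M X w < lay M X v then (1 : ℕ) else 0)
                 + (if w < v ∧ lay M X v < lay M X w then 1 else 0)))
      + (W'.filter (fun w => u < w ∧ w < v)).card)) := by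
    rw [Finset.card_filter, ← Finset.sum_add_distrib, ← Finset.sum_add_distrib]
    apply Finset.sum_induction _ Even (fun a b => Even.add) Even.zero
    intro w hw
    obtain ⟨hwU, hwu, hwv⟩ := hWU w hw
    have hlw : lay M X w ≠ lay M X u := hW w hwU hwu hwv
    rcases lt_trichotomy w u with h | h | h
    · have e1 : (if w < u ∧ lay M X u < lay M X w then (1 : ℕ) else 0)
          = if lay M X u < lay M X w then 1 else 0 := by
        by_cases hc : lay M X u < lay M X w
        · rw [if_pos ⟨h, hc⟩, if_pos hc]
        · rw [if_neg (fun hx => hc hx.2), if_neg hc]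
      have e2 : (if w < v ∧ lay M X v < lay M X w then (1 : ℕ) else 0)
          = if lay M X u < lay M X w then 1 else 0 := by
        rw [← hl]
        by_cases hc : lay M X u < lay M X w
        · rw [if_pos ⟨h.trans huv, hc⟩, if_pos hc]
        · rw [if_neg (fun hx => hc hx.2), if_neg hc]
      rw [if_neg (show ¬(u < w ∧ lay M X w < lay M X u) from fun hc => lt_asymm h hc.1),
        if_neg (show ¬(v < w ∧ lay M X w < lay M X v) from fun hc => lt_asymm (h.trans huv) hc.1),
        if_neg (show ¬(u < w ∧ w < v) from fun hc => lt_asymm h hc.1), e1, e2]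
      refine ⟨if lay M X u < lay M X w then 1 else 0, by ring⟩
    · exact absurd h hwu
    · rcases lt_trichotomy w v with h2 | h2 | h2
      · have hE : (if u < w ∧ w < v then (1 : ℕ) else 0) = 1 := if_pos ⟨h, h2⟩
        have hB : (if w < u ∧ lay M X u < lay M X w then (1 : ℕ) else 0) = 0 :=
          if_neg (fun hc => lt_asymm h hc.1)
        have hC : (if v < w ∧ lay M X w < lay M X v then (1 : ℕ) else 0) = 0 :=
          if_neg (fun hc => lt_asymm h2 hc.1)
        have eA : (if u < w ∧ lay M X w < lay M X u then (1 : ℕ) else 0)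
            = if lay M X w < lay M X u then 1 else 0 := by
          by_cases hc : lay M X w < lay M X u
          · rw [if_pos ⟨h, hc⟩, if_pos hc]
          · rw [if_neg (fun hx => hc hx.2), if_neg hc]
        have eD : (if w < v ∧ lay M X v < lay M X w then (1 : ℕ) else 0)
            = if lay M X u < lay M X w then 1 else 0 := by
          rw [← hl]
          by_cases hc : lay M X u < lay M X w
          · rw [if_pos ⟨h2, hc⟩, if_pos hc]
          · rw [if_neg (fun hx => hc hx.2), if_neg hc]
        rw [eA, eD, hB, hC, hE]
        rcases lt_or_gt_of_ne hlw with hc | hc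
        · rw [if_neg (lt_asymm hc), if_pos hc]
          decide
        · rw [if_pos hc, if_neg (lt_asymm hc)]
          decide
      · exact absurd h2 hwv
      · have e1 : (if u < w ∧ lay M X w < lay M X u then (1 : ℕ) else 0)
            = if lay M X w < lay M X u then 1 else 0 := by
          by_cases hc : lay M X w < lay M X u
          · rw [if_pos ⟨h, hc⟩, if_pos hc]
          · rw [if_neg (fun hx => hc hx.2), if_neg hc]
        have e2 : (if v < w ∧ lay M X w < lay M X v then (1 : ℕ) else 0)
            = if lay M X w < lay M X u then 1 else 0 := by
          rw [← hl]
          by_cases hc : lay M X w < lay M X u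
          · rw [if_pos ⟨h2, hc⟩, if_pos hc]
          · rw [if_neg (fun hx => hc hx.2), if_neg hc]
        rw [if_neg (show ¬(w < u ∧ lay M X u < lay M X w) from fun hc => lt_asymm h hc.1),
          if_neg (show ¬(w < v ∧ lay M X v < lay M X w) from fun hc => lt_asymm h2 hc.1),
          if_neg (show ¬(u < w ∧ w < v) from fun hc => lt_asymm h2 hc.2), e1, e2]
        refine ⟨if lay M X w < lay M X u then 1 else 0, by ring⟩
  rw [Nat.odd_iff]
  obtain ⟨c, hc⟩ := heven
  omega

end ClsAux

namespace ClsAux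

variable {n : ℕ} {K : Type*} [Field K]

lemma circuit_unidep {M : Matroid (Fin n)} (hE : M.E = Set.univ) {C : Finset (Fin n)}
    (hC : IsCircuit M C) : Unidep M C := by
  refine ⟨finset_subset_ground hE C, C, ⟨Finset.Subset.refl C, hC⟩, ?_⟩
  rintro C' ⟨hsub, hC'⟩
  by_contra hne
  exact hC.2 C' ((Finset.ssubset_iff_of_subset hsub).mpr (by
    by_contra hno
    push_neg at hno
    exact hne (Finset.Subset.antisymm hsub hno))) hC'.1

lemma unidep_of_erase_indep {M : Matroid (Fin n)} (hE : M.E = Set.univ)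
    {U C : Finset (Fin n)} {i₀ : Fin n} (hC : IsCircuit M C) (hCU : C ⊆ U)
    (hI : M.Indep ↑(U.erase i₀)) : Unidep M U := by
  refine ⟨finset_subset_ground hE U, C, ⟨hCU, hC⟩, ?_⟩
  rintro C' ⟨hsub, hC'⟩
  exact unique_circuit_of_erase_indep hE hI hsub hC' hCU hC

lemma neg_one_pow_add_eq_zero {a b : ℕ} (h : Odd (a + b)) : (-1 : K) ^ a + (-1 : K) ^ b = 0 := by
  rcases Nat.even_or_odd a with ha | ha
  · have hb : Odd b := by
      rcases Nat.even_or_odd b with hb | hb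
      · exact absurd (ha.add hb) (Nat.not_even_iff_odd.mpr h)
      · exact hb
    rw [Even.neg_one_pow ha, Odd.neg_one_pow hb, add_neg_cancel]
  · have hb : Even b := by
      rcases Nat.even_or_odd b with hb | hb
      · exact hb
      · exact absurd (Odd.add_odd ha hb) (Nat.not_even_iff_odd.mpr h)
    rw [Odd.neg_one_pow ha, Even.neg_one_pow hb, neg_add_cancel]

lemma bigF_gen_loop_zero {M : Matroid (Fin n)} (hE : M.E = Set.univ)
    (β : Fin n → Fin n → K) (χ : Finset (Fin n) → K) {i : Fin n}
    (hC : IsCircuit M {i}) (X S : Finset (Fin n)) :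
    bigF β M χ X S (gen β i) = 0 := by
  rw [bigF_apply, Phi_gen, Lop_xb]
  by_cases h : i ∈ S
  · rw [if_pos h, map_zero]
  · rw [if_neg h, map_smul, ccf_xb, smul_eq_mul,
      cfun_of_not_indep hE χ (not_indep_of_circuit_subset hE hC (by
        intro x hx
        rw [Finset.mem_singleton] at hx
        exact hx ▸ Finset.mem_insert_self i S)), mul_zero]

lemma bigF_bdry_circuit_zero {M : Matroid (Fin n)} (hE : M.E = Set.univ)
    {β : Fin n → Fin n → K} (hβ : ∀ i j : Fin n, i < j → β i j ≠ 0)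
    {χ : Finset (Fin n) → K} (h1 : UC1 M χ) (h2 : UC2 β M χ) (X : Finset (Fin n))
    {C : Finset (Fin n)} (hC : IsCircuit M C) (hcard : 1 < C.card) (S : Finset (Fin n)) :
    bigF β M χ X S (bdry β χ C) = 0 := by
  classical
  by_cases hCS : C ∩ S = ∅
  · have hdisj : Disjoint C S := Finset.disjoint_iff_inter_eq_empty.mpr hCS
    have hUer : ∀ i ∈ C, (C.erase i) ∪ S = (C ∪ S).erase i := by
      intro i hi
      have hiS : i ∉ S := Finset.disjoint_left.mp hdisj hi
      ext w
      simp only [Finset.mem_union, Finset.mem_erase]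
      constructor
      · rintro (hw | hw)
        · exact ⟨hw.1, Or.inl hw.2⟩
        · exact ⟨fun hwi => hiS (hwi ▸ hw), Or.inr hw⟩
      · rintro ⟨hwi, hw | hw⟩
        · exact Or.inl ⟨hwi, hw⟩
        · exact Or.inr hw
    by_cases hex : ∃ i ∈ C, Trans M X ((C ∪ S).erase i)
    · -- main case
      obtain ⟨i₀, hi₀C, hT₀⟩ := hex
      set U : Finset (Fin n) := C ∪ S with hUdef
      have hCU : C ⊆ U := Finset.subset_union_left
      have hi₀U : i₀ ∈ U := hCU hi₀C
      have hIndep : M.Indep ↑(U.erase i₀) := trans_indep hE hT₀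
      have hUuni : Unidep M U := unidep_of_erase_indep hE hC hCU hIndep
      have hCuni : Unidep M C := circuit_unidep hE hC
      obtain ⟨ε, hε0, hεeq⟩ := h2 U C hUuni hCuni hCU
      have hUC : U \ C = S := Finset.union_sdiff_cancel_left hdisj
      have htrans : bigF β M χ X ∅ (bdry β χ U) = ε * bigF β M χ X S (bdry β χ C) := by
        rw [hεeq, map_smul, smul_eq_mul, hUC]
        congr 1
        rw [bigF_apply, bigF_apply, map_mul, Module.End.mul_apply, Phi_eset_empty]
      have hcardU : U.card = X.card + 1 := by
        have hc1 : (U.erase i₀).card = X.card := hT₀.1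
        have hc2 := Finset.card_erase_of_mem hi₀U
        have hc3 : 1 ≤ U.card := Finset.card_pos.mpr ⟨i₀, hi₀U⟩
        omega
      have hi₀cl : i₀ ∉ M.closure ∅ := by
        intro hloop
        have hdep : M.Dep (↑({i₀} : Finset (Fin n)) : Set (Fin n)) := by
          rw [Matroid.dep_iff]
          refine ⟨fun hind => ?_, finset_subset_ground hE _⟩
          have hni := hind.notMem_closure_diff_of_mem
            (by simp : i₀ ∈ (↑({i₀} : Finset (Fin n)) : Set (Fin n)))
          apply hni
          have hds : (↑({i₀} : Finset (Fin n)) : Set (Fin n)) \ {i₀} = ∅ := by simp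
          rw [hds]
          exact hloop
        have hcirc : IsCircuit M {i₀} := by
          refine ⟨hdep, fun D hD hDdep => ?_⟩
          have hDempty : D = ∅ := by
            rcases Finset.eq_empty_or_nonempty D with h | h
            · exact h
            · exfalso
              obtain ⟨x, hx⟩ := h
              have := hD.subset hx
              rw [Finset.mem_singleton] at this
              subst this
              exact hD.2 (Finset.singleton_subset_iff.mpr hx)
          rw [hDempty] at hDdep
          exact hDdep.not_indep (by simpa using M.empty_indep)
        have hCeq : C = {i₀} := unique_circuit_of_erase_indep hE hIndep hCU hC
          (Finset.singleton_subset_iff.mpr hi₀U) hcirc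
        rw [hCeq] at hcard
        simp at hcard
      have hlay1 : 1 ≤ lay M X i₀ := lay_pos M X hi₀cl
      have hclFF : M.closure (FFlat M X X.card) = FFlat M X X.card := by
        rw [FFlat]; exact M.closure_closure _
      have hi₀F : i₀ ∈ FFlat M X X.card := by
        have ha1 := circuit_mem_closure hE hC hi₀C
        have ha2 : (↑(C.erase i₀) : Set (Fin n)) ⊆ ↑(U.erase i₀) := by
          exact_mod_cast Finset.erase_subset_erase _ hCU
        have ha3 := M.closure_subset_closure ha2 ha1
        have ha4 := M.closure_subset_closure (trans_subset_FFlat hT₀)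
        rw [hclFF] at ha4
        exact ha4 ha3
      have hlayk : lay M X i₀ ≤ X.card := lay_le M X hi₀F
      have hinj := hT₀.2.2
      have hsurj := Finset.surj_on_of_inj_on_of_card_le
        (s := U.erase i₀) (t := Finset.Icc 1 X.card)
        (fun a _ => lay M X a) (fun a ha => Finset.mem_Icc.mpr (hT₀.2.1 a ha))
        (fun a₁ a₂ ha₁ ha₂ heq => hinj (by exact_mod_cast ha₁) (by exact_mod_cast ha₂) heq)
        (by rw [Nat.card_Icc, hT₀.1]; omega)
      obtain ⟨u', hu'mem, hu'lay⟩ := hsurj (lay M X i₀) (Finset.mem_Icc.mpr ⟨hlay1, hlayk⟩)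
      have hu'U : u' ∈ U := Finset.mem_of_mem_erase hu'mem
      have hu'lay2 : lay M X i₀ = lay M X u' := hu'lay
      have hu'ne : u' ≠ i₀ := Finset.ne_of_mem_erase hu'mem
      have hTu' : Trans M X (U.erase u') := by
        refine ⟨?_, ?_, ?_⟩
        · rw [Finset.card_erase_of_mem hu'U, hcardU]
          omega
        · intro t ht
          rcases eq_or_ne t i₀ with rfl | htne
          · exact ⟨hlay1, hlayk⟩
          · exact hT₀.2.1 t (Finset.mem_erase.mpr ⟨htne, Finset.mem_of_mem_erase ht⟩)
        · intro s hs t ht hst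
          have hs' : s ∈ U.erase u' := by exact_mod_cast hs
          have ht' : t ∈ U.erase u' := by exact_mod_cast ht
          have hu'lay' : lay M X i₀ = lay M X u' := hu'lay
          have hmem' : ∀ w, w ∈ U.erase u' → w ≠ i₀ → w ∈ U.erase i₀ :=
            fun w hw hwne => Finset.mem_erase.mpr ⟨hwne, Finset.mem_of_mem_erase hw⟩
          have key : ∀ w, w ∈ U.erase u' → lay M X w = lay M X i₀ → w = i₀ := by
            intro w hw hlw
            by_contra hwne
            have hwu : w ∈ U.erase i₀ := hmem' w hw hwne
            have hweq : w = u' := hinj (by exact_mod_cast hwu) (by exact_mod_cast hu'mem)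
              (by rw [hlw, hu'lay'])
            exact (Finset.ne_of_mem_erase hw) hweq
          by_cases hsi : s = i₀
          · by_cases hti : t = i₀
            · rw [hsi, hti]
            · exact absurd (key t ht' (by rw [← hst, hsi])) hti
          · by_cases hti : t = i₀
            · exact absurd (key s hs' (by rw [hst, hti])) hsi
            · exact hinj (by exact_mod_cast hmem' s hs' hsi)
                (by exact_mod_cast hmem' t ht' hti) hst
      have hvanish : ∀ i ∈ U, i ≠ i₀ → i ≠ u' → cfun M χ X (U.erase i) = 0 := by
        intro i hiU hne1 hne2
        apply cfun_of_not_trans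
        rintro ⟨-, -, hinj'⟩
        have hm1 : i₀ ∈ U.erase i := Finset.mem_erase.mpr ⟨Ne.symm hne1, hi₀U⟩
        have hm2 : u' ∈ U.erase i := Finset.mem_erase.mpr ⟨Ne.symm hne2, hu'U⟩
        exact hu'ne (hinj' (by exact_mod_cast hm2) (by exact_mod_cast hm1) hu'lay2.symm)
      -- the main sum
      have hzero : bigF β M χ X ∅ (bdry β χ U) = 0 := by
        rw [FF_bdry]
        have hsub : ({i₀, u'} : Finset (Fin n)) ⊆ U := by
          intro x hx
          rcases Finset.mem_insert.mp hx with rfl | hx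
          · exact hi₀U
          · rw [Finset.mem_singleton] at hx
            exact hx ▸ hu'U
        rw [← Finset.sum_subset hsub (by
          intro x hxU hxp
          have hx1 : x ≠ i₀ := fun h => hxp (h ▸ Finset.mem_insert_self _ _)
          have hx2 : x ≠ u' := fun h => hxp (h ▸ Finset.mem_insert_of_mem (Finset.mem_singleton_self _))
          rw [hvanish x hxU hx1 hx2, mul_zero]),
          Finset.sum_pair (Ne.symm hu'ne)]
        have hterm : ∀ i, i ∈ U → Trans M X (U.erase i) →
            (-1 : K) ^ (posIn U i + 1) * χ (U.erase i) * cfun M χ X (U.erase i)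
              = (-1 : K) ^ (posIn U i + 1 + invT M X (U.erase i)) := by
          intro i hiU hTi
          have hχne : χ (U.erase i) ≠ 0 := (h1 _).mpr (trans_indep hE hTi)
          rw [cfun, if_pos hTi, pow_add, pow_add]
          field_simp
          ring
        rw [hterm i₀ hi₀U hT₀, hterm u' hu'U hTu']
        -- parity
        have hlayeq : lay M X i₀ = lay M X u' := hu'lay2
        have hWcond : ∀ w ∈ U, w ≠ i₀ → w ≠ u' → lay M X w ≠ lay M X i₀ := by
          intro w hwU hw1 hw2 hlw
          have hm1 : w ∈ U.erase i₀ := Finset.mem_erase.mpr ⟨hw1, hwU⟩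
          exact hw2 (hinj (by exact_mod_cast hm1) (by exact_mod_cast hu'mem)
            (by rw [hlw, hu'lay2]))
        rcases lt_or_gt_of_ne (Ne.symm hu'ne : i₀ ≠ u') with hlt | hlt
        · exact neg_one_pow_add_eq_zero (parity_main M X U hi₀U hu'U hlt hlayeq hWcond)
        · have hodd := parity_main M X U hu'U hi₀U hlt hlayeq.symm (by
            intro w hwU hw2 hw1 hlw
            exact hWcond w hwU hw1 hw2 (by rw [hlw, ← hu'lay2]))
          rw [add_comm] at hodd
          exact neg_one_pow_add_eq_zero hodd
      rw [htrans] at hzero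
      rcases mul_eq_zero.mp hzero with h | h
      · exact absurd h hε0
      · exact h
    · -- no transversal: all terms vanish
      push_neg at hex
      rw [bigF_bdry]
      apply List.sum_eq_zero
      intro x hx
      rcases List.mem_map.mp hx with ⟨pi, hpi, rfl⟩
      have hiC : pi.2 ∈ C := (Finset.mem_sort _).mp (mem_of_mem_enum hpi)
      obtain ⟨γ, hγ⟩ := Phi_elist_ex β (Finset.sort (C.erase pi.2) (· ≤ ·)) S
      rw [eset_eq_elist, hγ, Finset.sort_toFinset, map_smul, ccf_xb, smul_eq_mul,
        hUer pi.2 hiC, cfun_of_not_trans χ (hex pi.2 hiC), mul_zero, mul_zero]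
  · -- C ∩ S nonempty
    obtain ⟨c₀, hc₀⟩ := Finset.nonempty_iff_ne_empty.mpr hCS
    have hc₀C : c₀ ∈ C := (Finset.mem_inter.mp hc₀).1
    have hc₀S : c₀ ∈ S := (Finset.mem_inter.mp hc₀).2
    rw [bigF_bdry]
    apply List.sum_eq_zero
    intro x hx
    rcases List.mem_map.mp hx with ⟨pi, hpi, rfl⟩
    have hiC : pi.2 ∈ C := (Finset.mem_sort _).mp (mem_of_mem_enum hpi)
    by_cases hover : ∃ a ∈ Finset.sort (C.erase pi.2) (· ≤ ·), a ∈ S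
    · rw [eset_eq_elist, Phi_elist_overlap β _ S hover, map_zero, mul_zero]
    · push_neg at hover
      have hc₀i : c₀ = pi.2 := by
        by_contra hne
        exact hover c₀ ((Finset.mem_sort _).mpr (Finset.mem_erase.mpr ⟨hne, hc₀C⟩)) hc₀S
      obtain ⟨γ, hγ⟩ := Phi_elist_ex β (Finset.sort (C.erase pi.2) (· ≤ ·)) S
      rw [eset_eq_elist, hγ, Finset.sort_toFinset, map_smul, ccf_xb, smul_eq_mul,
        cfun_of_not_indep hE χ (not_indep_of_circuit_subset hE hC (by
          intro y hy
          by_cases hyi : y = pi.2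
          · exact Finset.mem_union_right _ (hyi ▸ hc₀i ▸ hc₀S)
          · exact Finset.mem_union_left _ (Finset.mem_erase.mpr ⟨hyi, hy⟩))),
        mul_zero, mul_zero]

end ClsAux

namespace ClsAux

variable {n : ℕ} {K : Type*} [Field K]

lemma FF_eset_X {M : Matroid (Fin n)} (hE : M.E = Set.univ) (β : Fin n → Fin n → K)
    (χ : Finset (Fin n) → K) {X : Finset (Fin n)} (hX : M.Indep ↑X) :
    bigF β M χ X ∅ (eset β X) = (χ X)⁻¹ := by
  rw [bigF_apply, Phi_eset_empty, ccf_xb, cfun, if_pos (trans_X hE hX), invT_X hE hX,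
    pow_zero, one_mul]

lemma FF_ideal_zero {M : Matroid (Fin n)} (hE : M.E = Set.univ)
    {β : Fin n → Fin n → K} (hβ : ∀ i j : Fin n, i < j → β i j ≠ 0)
    {χ : Finset (Fin n) → K} (h1 : UC1 M χ) (h2 : UC2 β M χ) (X : Finset (Fin n))
    {z : EAlg n K β} (hz : z ∈ chiIdeal β M χ) : bigF β M χ X ∅ z = 0 := by
  have hker : chiIdeal β M χ ≤ LinearMap.ker (bigF β M χ X ∅) := by
    rw [chiIdeal]
    apply Submodule.span_le.mpr
    rintro y (⟨C, hC, hcard, w, rfl⟩ | ⟨i, hC, w, rfl⟩)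
    · simp only [SetLike.mem_coe, LinearMap.mem_ker]
      rw [bigF_apply, map_mul, Module.End.mul_apply]
      have hψ : (ccf M χ X).comp (Phi β (bdry β χ C)) = 0 := by
        apply Finsupp.lhom_ext
        intro S b
        have hsingle : (Finsupp.single S b : Finset (Fin n) →₀ K) = b • xb K S := by
          rw [xb, Finsupp.smul_single, smul_eq_mul, mul_one]
        rw [LinearMap.comp_apply, hsingle, map_smul, map_smul, smul_eq_mul]
        have h0 : ccf M χ X (Phi β (bdry β χ C) (xb K S)) = 0 := by
          have := bigF_bdry_circuit_zero hE hβ h1 h2 X hC hcard S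
          rwa [bigF_apply] at this
        rw [h0, mul_zero, LinearMap.zero_apply]
      have := LinearMap.congr_fun hψ (Phi β w (xb K ∅))
      rwa [LinearMap.comp_apply, LinearMap.zero_apply] at this
    · simp only [SetLike.mem_coe, LinearMap.mem_ker]
      rw [bigF_apply, map_mul, Module.End.mul_apply]
      have hψ : (ccf M χ X).comp (Phi β (gen β i)) = 0 := by
        apply Finsupp.lhom_ext
        intro S b
        have hsingle : (Finsupp.single S b : Finset (Fin n) →₀ K) = b • xb K S := by
          rw [xb, Finsupp.smul_single, smul_eq_mul, mul_one]
        rw [LinearMap.comp_apply, hsingle, map_smul, map_smul, smul_eq_mul]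
        have h0 : ccf M χ X (Phi β (gen β i) (xb K S)) = 0 := by
          have := bigF_gen_loop_zero hE β χ hC X S
          rwa [bigF_apply] at this
        rw [h0, mul_zero, LinearMap.zero_apply]
      have := LinearMap.congr_fun hψ (Phi β w (xb K ∅))
      rwa [LinearMap.comp_apply, LinearMap.zero_apply] at this
  exact LinearMap.mem_ker.mp (hker hz)

lemma eset_mem_ideal {M : Matroid (Fin n)} (hE : M.E = Set.univ)
    {β : Fin n → Fin n → K} (hβ : ∀ i j : Fin n, i < j → β i j ≠ 0)
    {χ : Finset (Fin n) → K} (h1 : UC1 M χ) {X : Finset (Fin n)}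
    (hdep : ¬ M.Indep ↑X) : eset β X ∈ chiIdeal β M χ := by
  classical
  obtain ⟨C, hCX, hC⟩ := exists_circuit_subset hE X hdep
  have hCne : C.Nonempty := by
    rcases Finset.eq_empty_or_nonempty C with rfl | h
    · exact absurd M.empty_indep (by simpa using hC.1.not_indep)
    · exact h
  rcases eq_or_lt_of_le (Nat.succ_le_of_lt (Finset.card_pos.mpr hCne) : 1 ≤ C.card) with hcard | hcard
  · -- loop case
    obtain ⟨i, rfl⟩ := Finset.card_eq_one.mp hcard.symm
    have hiX : i ∈ X := hCX (Finset.mem_singleton_self i)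
    obtain ⟨γ, hγ0, hγ⟩ := gen_mul_eset β hβ (a := i) (S := X.erase i) (Finset.notMem_erase i X)
    rw [Finset.insert_erase hiX] at hγ
    have hmem : gen β i * eset β (X.erase i) ∈ chiIdeal β M χ :=
      Submodule.subset_span (Or.inr ⟨i, hC, eset β (X.erase i), rfl⟩)
    have heq : eset β X = γ⁻¹ • (gen β i * eset β (X.erase i)) := by
      rw [hγ, smul_smul, inv_mul_cancel₀ hγ0, one_smul]
    rw [heq]
    exact Submodule.smul_mem _ _ hmem
  · -- circuit of size > 1
    obtain ⟨a, haC⟩ := hCne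
    have hstep1 : ∃ δ : K, δ ≠ 0 ∧ bdry β χ C * gen β a = δ • eset β C := by
      obtain ⟨γa, hγa0, hγa⟩ := eset_mul_gen β hβ (a := a) (T := C.erase a)
        (Finset.notMem_erase a C)
      rw [Finset.insert_erase haC] at hγa
      refine ⟨((-1 : K) ^ (posIn C a + 1) * χ (C.erase a)) * γa,
        mul_ne_zero (mul_ne_zero (pow_ne_zero _ (neg_ne_zero.mpr one_ne_zero))
          ((h1 _).mpr (circuit_erase_indep hE hC haC))) hγa0, ?_⟩
      rw [bdry_enum, ← List.sum_map_mul_right,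
        enum_sum_eq (C.sort (· ≤ ·)) (Finset.sortedLT_sort C).pairwise
          (fun p i => (((-1 : K) ^ (p + 1) * χ (C.erase i)) • eset β (C.erase i)) * gen β a),
        Finset.sort_toFinset,
        Finset.sum_eq_single a (fun i hiC hne => by
          rw [smul_mul_assoc, eset_mul_gen_mem β hβ
            (Finset.mem_erase.mpr ⟨Ne.symm hne, haC⟩), smul_zero])
          (fun h => absurd haC h),
        smul_mul_assoc, hγa, smul_smul, posIn]
    obtain ⟨δ, hδ0, hδ⟩ := hstep1
    obtain ⟨γ₂, hγ₂0, hγ₂⟩ := eset_mul_eset β hβ (A := C) (B := X \ C) Finset.disjoint_sdiff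
    rw [Finset.union_sdiff_of_subset hCX] at hγ₂
    have hfinal : bdry β χ C * (gen β a * eset β (X \ C)) = (δ * γ₂) • eset β X := by
      rw [← mul_assoc, hδ, smul_mul_assoc, hγ₂, smul_smul]
    have hmem : bdry β χ C * (gen β a * eset β (X \ C)) ∈ chiIdeal β M χ :=
      Submodule.subset_span (Or.inl ⟨C, hC, hcard, gen β a * eset β (X \ C), rfl⟩)
    have heq : eset β X = (δ * γ₂)⁻¹ • (bdry β χ C * (gen β a * eset β (X \ C))) := by
      rw [hfinal, smul_smul, inv_mul_cancel₀ (mul_ne_zero hδ0 hγ₂0), one_smul]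
    rw [heq]
    exact Submodule.smul_mem _ _ hmem

end ClsAux
/-- in a χ-algebra, `[e_X] ≠ 0` iff `X` is independent. -/
theorem cls_ne_zero_iff {n : ℕ} {K : Type*} [Field K] (β : Fin n → Fin n → K)
    (hβ : ∀ i j : Fin n, i < j → β i j ≠ 0)
    (M : Matroid (Fin n)) (hE : M.E = Set.univ)
    (χ : Finset (Fin n) → K) (h1 : UC1 M χ) (h2 : UC2 β M χ)
    (X : Finset (Fin n)) :
    cls β M χ X ≠ 0 ↔ M.Indep ↑X := by
  constructor
  · intro hne
    by_contra hdep
    exact hne ((Submodule.Quotient.mk_eq_zero _).mpr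
      (ClsAux.eset_mem_ideal hE hβ h1 hdep))
  · intro hX h0
    have hmem : eset β X ∈ chiIdeal β M χ := (Submodule.Quotient.mk_eq_zero _).mp h0
    have hzero := ClsAux.FF_ideal_zero hE hβ h1 h2 X hmem
    rw [ClsAux.FF_eset_X hE β χ hX] at hzero
    exact inv_ne_zero ((h1 X).mpr hX) hzero
end
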